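/- arXiv:2405.09836 — 2 statements merged into one kernel-verified Lean document; each statement's English description precedes it below -/
import Mathlib

section
/- Let K be a field, n ≥ 4 an integer, and I_{K_n} = I_{G_1} + I_{G_2} a subgraph splitting of the toric ideal of the complete graph K_n. Then each of G_1 and G_2 contains all edges of K_n except at most two, i.e., |E(K_n) ∖ E(G_1)| ≤ 2 and |E(K_n) ∖ E(G_2)| ≤ 2. -/
open MvPolynomial

/-- The monomial `y_u * y_w` associated to the edge `e = {u, w}`. -/
noncomputable def edgeMon (K : Type) [Field K] {V : Type} (e : Sym2 V) :
    MvPolynomial V K :=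
  Sym2.lift ⟨fun u w => X u * X w, fun u w => mul_comm _ _⟩ e

/-- The toric ideal `I_G` of a graph `G`, i.e. the kernel of the `K`-algebra map
`K[x_e : e ∈ E(G)] → K[y_v : v ∈ V]`, sending `x_e ↦ y_u y_w` for `e = {u, w}`. -/
noncomputable def toricIdeal (K : Type) [Field K] {V : Type} (G : SimpleGraph V) :
    Ideal (MvPolynomial G.edgeSet K) :=
  RingHom.ker (MvPolynomial.aeval (fun e : G.edgeSet => edgeMon K (e : Sym2 V)) :
    MvPolynomial G.edgeSet K →ₐ[K] MvPolynomial V K)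

/-- For a subgraph `H ≤ G`, the ideal of `K[x_e : e ∈ E(G)]` obtained by extending
the toric ideal `I_H` along the inclusion of variables `x_e` (`e ∈ E(H)`). -/
noncomputable def extIdeal (K : Type) [Field K] {V : Type} (G H : SimpleGraph V)
    (h : H ≤ G) : Ideal (MvPolynomial G.edgeSet K) :=
  (toricIdeal K H).map
    (MvPolynomial.rename (Set.inclusion (SimpleGraph.edgeSet_mono h)) :
      MvPolynomial H.edgeSet K →ₐ[K] MvPolynomial G.edgeSet K)

/-- A subgraph splitting `I_G = I_{G₁} + I_{G₂}`, with `I_{G₁} ≠ I_G ≠ I_{G₂}`. -/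
def IsSubgraphSplitting (K : Type) [Field K] {V : Type} (G G₁ G₂ : SimpleGraph V)
    (h₁ : G₁ ≤ G) (h₂ : G₂ ≤ G) : Prop :=
  toricIdeal K G = extIdeal K G G₁ h₁ + extIdeal K G G₂ h₂ ∧
    extIdeal K G G₁ h₁ ≠ toricIdeal K G ∧ extIdeal K G G₂ h₂ ≠ toricIdeal K G

/-- `I_G` is subgraph splittable. -/
def SubgraphSplittable (K : Type) [Field K] {V : Type} (G : SimpleGraph V) : Prop :=
  ∃ (G₁ G₂ : SimpleGraph V) (h₁ : G₁ ≤ G) (h₂ : G₂ ≤ G),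
    IsSubgraphSplitting K G G₁ G₂ h₁ h₂

/-- Alternating products: for a list `[e₁, …, e₂q]` the first component is
`x_{e₁} x_{e₃} ⋯` (odd positions) and the second is `x_{e₂} x_{e₄} ⋯` (even positions). -/
noncomputable def altProd (K : Type) [Field K] {α : Type} :
    List α → MvPolynomial α K × MvPolynomial α K
  | [] => (1, 1)
  | a :: l => (X a * (altProd K l).2, (altProd K l).1)

/-- The edges of a walk in `G`, as a list of elements of `E(G)`. -/
def walkEdgeList {V : Type} {G : SimpleGraph V} {u v : V} (w : G.Walk u v) :
    List G.edgeSet :=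
  w.edges.attachWith (· ∈ G.edgeSet) (fun _ he => w.edges_subset_edgeSet he)

/-- The binomial `B_w` of an even closed walk `w = (e_{i₁}, …, e_{i₂q})`:
`∏ x_{e_{i_{2k-1}}} - ∏ x_{e_{i_{2k}}}`. -/
noncomputable def walkBinomial (K : Type) [Field K] {V : Type} {G : SimpleGraph V}
    {v : V} (w : G.Walk v v) : MvPolynomial G.edgeSet K :=
  (altProd K (walkEdgeList w)).1 - (altProd K (walkEdgeList w)).2

/-- `f` is a binomial of `I_G`, i.e. `f = B_w` for an even closed walk `w` of `G`. -/
def IsBinomial (K : Type) [Field K] {V : Type} (G : SimpleGraph V)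
    (f : MvPolynomial G.edgeSet K) : Prop :=
  ∃ (v : V) (w : G.Walk v v), Even w.length ∧ f = walkBinomial K w

/-- `S` is a minimal generating set of binomials of the ideal `I`: all its members
are binomials `B_w`, it generates `I`, and no proper subset generates `I`. -/
def IsMinBinomialGens (K : Type) [Field K] {V : Type} (G : SimpleGraph V)
    (S : Set (MvPolynomial G.edgeSet K)) (I : Ideal (MvPolynomial G.edgeSet K)) : Prop :=
  (∀ f ∈ S, IsBinomial K G f) ∧ Ideal.span S = I ∧
    ∀ T : Set (MvPolynomial G.edgeSet K), T ⊂ S → Ideal.span T ≠ I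

/-- A family of even closed walks `w₁, …, w_r` of `G` (the data underlying a set of
binomials `S = {B_{w₁}, …, B_{w_r}}`). -/
structure BinomialWalkGens (K : Type) [Field K] {V : Type} (G : SimpleGraph V) where
  r : ℕ
  base : Fin r → V
  walk : (i : Fin r) → G.Walk (base i) (base i)
  even : ∀ i, Even (walk i).length

namespace BinomialWalkGens

variable {K : Type} [Field K] {V : Type} {G : SimpleGraph V}

/-- The set of binomials `{B_{w₁}, …, B_{w_r}}`. -/
def binomials (S : BinomialWalkGens K G) : Set (MvPolynomial G.edgeSet K) :=
  Set.range fun i => walkBinomial K (S.walk i)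

/-- `S = {B_{w₁}, …, B_{w_r}}` is a minimal generating set of binomials of `I`. -/
def IsMinGens (S : BinomialWalkGens K G) (I : Ideal (MvPolynomial G.edgeSet K)) : Prop :=
  IsMinBinomialGens K G S.binomials I

/-- The subgraph `G_S^e` of `G`: the union of the walks `w_i` with `e ∈ E(w_i)`. -/
def GSe (S : BinomialWalkGens K G) (e : Sym2 V) : SimpleGraph V :=
  SimpleGraph.fromEdgeSet (⋃ i ∈ {i : Fin S.r | e ∈ (S.walk i).edges}, {f | f ∈ (S.walk i).edges})

lemma GSe_le (S : BinomialWalkGens K G) (e : Sym2 V) : S.GSe e ≤ G := by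
  intro u w h
  rw [GSe, SimpleGraph.fromEdgeSet_adj] at h
  obtain ⟨hm, hne⟩ := h
  simp only [Set.mem_iUnion, Set.mem_setOf_eq] at hm
  obtain ⟨i, -, hi⟩ := hm
  exact G.mem_edgeSet.mp ((S.walk i).edges_subset_edgeSet hi)

/-- The subgraph `G_S^F = ⋃_{e ∈ F} G_S^e` of `G`. -/
def GSF (S : BinomialWalkGens K G) (F : Set (Sym2 V)) : SimpleGraph V :=
  ⨆ e ∈ F, S.GSe e

lemma GSF_le (S : BinomialWalkGens K G) (F : Set (Sym2 V)) : S.GSF F ≤ G :=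
  iSup₂_le fun e _ => S.GSe_le e

/-- The subgraph `G_S^v` of `G`: the union of the edge sets of the walks `w_i`
with `v ∈ V(w_i)`. -/
def GSv (S : BinomialWalkGens K G) (v : V) : SimpleGraph V :=
  SimpleGraph.fromEdgeSet (⋃ i ∈ {i : Fin S.r | v ∈ (S.walk i).support}, {f | f ∈ (S.walk i).edges})

lemma GSv_le (S : BinomialWalkGens K G) (v : V) : S.GSv v ≤ G := by
  intro u w h
  rw [GSv, SimpleGraph.fromEdgeSet_adj] at h
  obtain ⟨hm, hne⟩ := h
  simp only [Set.mem_iUnion, Set.mem_setOf_eq] at hm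
  obtain ⟨i, -, hi⟩ := hm
  exact G.mem_edgeSet.mp ((S.walk i).edges_subset_edgeSet hi)

end BinomialWalkGens

/-- `I_G` is edge splittable: there are an edge `e` of `G` and a minimal generating
set of binomials `S` of `I_G` such that `I_G = I_{G_S^e} + I_{G∖e}` is a subgraph
splitting of `I_G`. -/
def EdgeSplittable (K : Type) [Field K] {V : Type} (G : SimpleGraph V) : Prop :=
  ∃ (e : Sym2 V) (_ : e ∈ G.edgeSet) (S : BinomialWalkGens K G),
    S.IsMinGens (toricIdeal K G) ∧
    IsSubgraphSplitting K G (S.GSe e) (G.deleteEdges {e}) (S.GSe_le e)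
      (SimpleGraph.deleteEdges_le _)

/-- A minimal splitting: a subgraph splitting `I_G = I_{G₁} + I_{G₂}` admitting
minimal generating sets of binomials `S` of `I_{G₁}` and `T` of `I_{G₂}` such that
`S ∪ T` is a minimal generating set of `I_G`. -/
def IsMinimalSplitting (K : Type) [Field K] {V : Type} (G G₁ G₂ : SimpleGraph V)
    (h₁ : G₁ ≤ G) (h₂ : G₂ ≤ G) : Prop :=
  IsSubgraphSplitting K G G₁ G₂ h₁ h₂ ∧
    ∃ S T : Set (MvPolynomial G.edgeSet K),
      IsMinBinomialGens K G S (extIdeal K G G₁ h₁) ∧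
      IsMinBinomialGens K G T (extIdeal K G G₂ h₂) ∧
      IsMinBinomialGens K G (S ∪ T) (toricIdeal K G)

/-- A reduced splitting: a subgraph splitting `I_G = I_{G₁} + I_{G₂}` such that for all
subgraphs `H₁ ⊆ G₁`, `H₂ ⊆ G₂` with `I_G = I_{H₁} + I_{H₂}` one has `I_{H₁} = I_{G₁}`
and `I_{H₂} = I_{G₂}`. -/
def IsReducedSplitting (K : Type) [Field K] {V : Type} (G G₁ G₂ : SimpleGraph V)
    (h₁ : G₁ ≤ G) (h₂ : G₂ ≤ G) : Prop :=
  IsSubgraphSplitting K G G₁ G₂ h₁ h₂ ∧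
    ∀ (H₁ H₂ : SimpleGraph V) (hH₁ : H₁ ≤ G₁) (hH₂ : H₂ ≤ G₂),
      toricIdeal K G = extIdeal K G H₁ (hH₁.trans h₁) + extIdeal K G H₂ (hH₂.trans h₂) →
      extIdeal K G H₁ (hH₁.trans h₁) = extIdeal K G G₁ h₁ ∧
        extIdeal K G H₂ (hH₂.trans h₂) = extIdeal K G G₂ h₂

/-- The wheel graph `W_{n+1}`: vertices `0, …, n-1` (the cycle `C_n`, with edges between
`i` and `(i+1) % n`) together with the universal vertex `n` joined to all cycle vertices. -/
def wheelGraph (n : ℕ) : SimpleGraph (Fin (n + 1)) :=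
  SimpleGraph.fromRel fun u v =>
    (u.val < n ∧ v.val < n ∧ v.val = (u.val + 1) % n) ∨ (u.val = n ∧ v.val < n)

section Aux

open scoped Classical

variable {K : Type} [Field K] {V : Type}

/-- vertex multidegree of an edge -/
noncomputable def vmult : Sym2 V → (V →₀ ℕ) :=
  Sym2.lift ⟨fun u w => Finsupp.single u 1 + Finsupp.single w 1, fun u w => add_comm _ _⟩

@[simp] lemma vmult_mk (u w : V) : vmult s(u, w) = Finsupp.single u 1 + Finsupp.single w 1 :=
  rfl

lemma edgeMon_eq_monomial (e : Sym2 V) : edgeMon K e = monomial (vmult e) 1 := by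
  induction e with
  | _ u w =>
    have hX : ∀ v : V, (X v : MvPolynomial V K) = monomial (Finsupp.single v 1) 1 := by
      intro v; rw [← X_pow_eq_monomial, pow_one]
    have h0 : edgeMon K s(u, w) = X u * X w := by simp [edgeMon]
    rw [h0, hX u, hX w, monomial_mul, vmult_mk, one_mul]

@[simp] lemma toMultiset_vmult (u w : V) :
    (vmult s(u, w)).toMultiset = {u, w} := by
  simp [vmult_mk, Finsupp.toMultiset_add, Finsupp.toMultiset_single]

lemma toMultiset_inj {α : Type*} {f g : α →₀ ℕ} (h : f.toMultiset = g.toMultiset) : f = g := by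
  classical
  rw [Finsupp.toMultiset_eq_iff] at h
  simp [h]

lemma pair_eq_of_multiset {u w y z : V} (h : ({u, w} : Multiset V) = {y, z}) :
    s(u, w) = s(y, z) := by
  have hu : u ∈ ({y, z} : Multiset V) := by rw [← h]; simp
  simp only [Multiset.insert_eq_cons, Multiset.mem_cons, Multiset.mem_singleton] at hu
  rcases hu with rfl | rfl
  · have : ({w} : Multiset V) = {z} := by
      have := h
      rwa [show ({u,w} : Multiset V) = u ::ₘ {w} from rfl,
        show ({u,z} : Multiset V) = u ::ₘ {z} from rfl, Multiset.cons_inj_right] at this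
    rw [Multiset.singleton_inj] at this
    rw [this]
  · -- u = z
    have h' : ({u, w} : Multiset V) = {u, y} := by
      rw [h]; exact Multiset.cons_swap _ _ _
    have : ({w} : Multiset V) = {y} := by
      rwa [show ({u,w} : Multiset V) = u ::ₘ {w} from rfl,
        show ({u,y} : Multiset V) = u ::ₘ {y} from rfl, Multiset.cons_inj_right] at h'
    rw [Multiset.singleton_inj] at this
    rw [this, Sym2.eq_swap]

lemma vmult_injective : Function.Injective (vmult : Sym2 V → (V →₀ ℕ)) := by
  intro e e' h
  induction e with
  | _ u w =>
    induction e' with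
    | _ u' w' =>
      have := congrArg Finsupp.toMultiset h
      rw [toMultiset_vmult, toMultiset_vmult] at this
      exact pair_eq_of_multiset this



/-- the vertex multidegree of an exponent vector -/
noncomputable def edeg (G : SimpleGraph V) (μ : G.edgeSet →₀ ℕ) : V →₀ ℕ :=
  μ.sum fun e k => k • vmult (e : Sym2 V)

lemma card_toMultiset_smul {α : Type*} (ν : α →₀ ℕ) (k : ℕ) :
    Multiset.card (k • ν).toMultiset = k * Multiset.card ν.toMultiset := by
  rw [Finsupp.card_toMultiset, Finsupp.card_toMultiset, Finsupp.sum_smul_index]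
  · simp [Finsupp.sum, Finset.mul_sum]
  · intro a; rfl

lemma card_toMultiset_vmult (e : Sym2 V) : Multiset.card (vmult e).toMultiset = 2 := by
  induction e with
  | _ u w => rw [toMultiset_vmult]; rfl

@[simp] lemma edeg_zero (G : SimpleGraph V) : edeg G 0 = 0 := by
  simp [edeg]

lemma edeg_add (G : SimpleGraph V) (μ ν : G.edgeSet →₀ ℕ) :
    edeg G (μ + ν) = edeg G μ + edeg G ν := by
  classical
  apply Finsupp.sum_add_index
  · intro a _; simp
  · intro a _ b₁ b₂; rw [add_smul]

lemma edeg_single (G : SimpleGraph V) (e : G.edgeSet) (k : ℕ) :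
    edeg G (Finsupp.single e k) = k • vmult (e : Sym2 V) := by
  classical
  rw [edeg, Finsupp.sum_single_index]
  simp

lemma card_edeg (G : SimpleGraph V) (μ : G.edgeSet →₀ ℕ) :
    Multiset.card (edeg G μ).toMultiset = 2 * Multiset.card μ.toMultiset := by
  classical
  induction μ using Finsupp.induction with
  | zero => simp
  | single_add e k f hef hk ih =>
    rw [show Finsupp.single e k + f = f + Finsupp.single e k from add_comm _ _] at *
    rw [edeg_add, Finsupp.toMultiset_add, Finsupp.toMultiset_add, Multiset.card_add,
      Multiset.card_add, ih, edeg_single, card_toMultiset_smul, card_toMultiset_vmult,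
      Finsupp.toMultiset_single, Multiset.card_nsmul, Multiset.card_singleton]
    ring

lemma prod_monomial_one {α : Type} (s : Finset α) (f : α → (V →₀ ℕ)) :
    (∏ a ∈ s, (monomial (f a) (1 : K))) = monomial (∑ a ∈ s, f a) 1 := by
  classical
  induction s using Finset.cons_induction with
  | empty => simp [monomial_zero']
  | cons a s ha ih => rw [Finset.prod_cons, ih, monomial_mul, Finset.sum_cons, one_mul]

lemma aeval_monomial_edge (G : SimpleGraph V) (μ : G.edgeSet →₀ ℕ) (c : K) :
    (aeval fun e : G.edgeSet => edgeMon K (e : Sym2 V)) (monomial μ c) =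
      monomial (edeg G μ) c := by
  classical
  rw [aeval_monomial]
  have h1 : (μ.prod fun e k => edgeMon K (e : Sym2 V) ^ k) =
      monomial (edeg G μ) (1 : K) := by
    have h2 : (μ.prod fun e k => edgeMon K (e : Sym2 V) ^ k) =
        ∏ e ∈ μ.support, monomial ((μ e) • vmult (e : Sym2 V)) (1 : K) := by
      apply Finset.prod_congr rfl
      intro e _
      simp only [edgeMon_eq_monomial, monomial_pow, one_pow]
    rw [h2, prod_monomial_one]
    rfl
  rw [h1, algebraMap_eq, C_mul_monomial, mul_one]

lemma coeff_aeval_toric (G : SimpleGraph V) (h : MvPolynomial G.edgeSet K) (m : V →₀ ℕ) :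
    coeff m ((aeval fun e : G.edgeSet => edgeMon K (e : Sym2 V)) h) =
      ∑ μ ∈ h.support.filter (fun μ => edeg G μ = m), coeff μ h := by
  classical
  conv_lhs => rw [as_sum h]
  rw [map_sum, coeff_sum, Finset.sum_filter]
  apply Finset.sum_congr rfl
  intro μ _
  rw [aeval_monomial_edge, coeff_monomial]

lemma mem_toric_coeff (G : SimpleGraph V) {g : MvPolynomial G.edgeSet K}
    (hg : g ∈ toricIdeal K G) (m : V →₀ ℕ) :
    ∑ μ ∈ g.support.filter (fun μ => edeg G μ = m), coeff μ g = 0 := by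
  rw [← coeff_aeval_toric]
  have : (aeval fun e : G.edgeSet => edgeMon K (e : Sym2 V)) g = 0 := by
    rwa [toricIdeal, RingHom.mem_ker] at hg
  rw [this, coeff_zero]

lemma coeff_toric_unique (G : SimpleGraph V) {g : MvPolynomial G.edgeSet K}
    (hg : g ∈ toricIdeal K G) (m : V →₀ ℕ) (μ₀ : G.edgeSet →₀ ℕ)
    (h0 : edeg G μ₀ = m) (huniq : ∀ μ, edeg G μ = m → μ = μ₀) :
    coeff μ₀ g = 0 := by
  classical
  have hkey := mem_toric_coeff G hg m
  have hsub : g.support.filter (fun μ => edeg G μ = m) ⊆ {μ₀} := by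
    intro μ hμ
    rw [Finset.mem_filter] at hμ
    simp [huniq μ hμ.2]
  rcases Finset.subset_singleton_iff.mp hsub with hempty | hfull
  · by_cases hμs : μ₀ ∈ g.support
    · exfalso
      have : μ₀ ∈ g.support.filter (fun μ => edeg G μ = m) := by
        rw [Finset.mem_filter]; exact ⟨hμs, h0⟩
      rw [hempty] at this; simp at this
    · exact MvPolynomial.notMem_support_iff.mp hμs
  · rw [hfull, Finset.sum_singleton] at hkey
    exact hkey

lemma coeff_toric_triple (G : SimpleGraph V) {g : MvPolynomial G.edgeSet K}
    (hg : g ∈ toricIdeal K G) (m : V →₀ ℕ) (μ₁ μ₂ μ₃ : G.edgeSet →₀ ℕ)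
    (h1 : edeg G μ₁ = m) (h2 : edeg G μ₂ = m) (h3 : edeg G μ₃ = m)
    (h12 : μ₁ ≠ μ₂) (h13 : μ₁ ≠ μ₃) (h23 : μ₂ ≠ μ₃)
    (huniq : ∀ μ, edeg G μ = m → μ = μ₁ ∨ μ = μ₂ ∨ μ = μ₃) :
    coeff μ₁ g + coeff μ₂ g + coeff μ₃ g = 0 := by
  classical
  have hkey := mem_toric_coeff G hg m
  have hsub : g.support.filter (fun μ => edeg G μ = m) ⊆ {μ₁, μ₂, μ₃} := by
    intro μ hμ
    rw [Finset.mem_filter] at hμ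
    rcases huniq μ hμ.2 with rfl | rfl | rfl <;> simp
  have := Finset.sum_subset (f := fun μ => coeff μ g) hsub (fun μ hμ hnμ => by
    rw [Finset.mem_filter, not_and] at hnμ
    by_cases hs : μ ∈ g.support
    · exfalso
      apply hnμ hs
      rcases Finset.mem_insert.mp hμ with rfl | hμ'
      · exact h1
      · rcases Finset.mem_insert.mp hμ' with rfl | hμ''
        · exact h2
        · rw [Finset.mem_singleton] at hμ''; rw [hμ'']; exact h3
    · exact MvPolynomial.notMem_support_iff.mp hs)
  rw [hkey] at this
  rw [Finset.sum_insert (by simp [h12, h13]), Finset.sum_insert (by simp [h23]),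
    Finset.sum_singleton] at this
  rw [← add_assoc] at this
  exact this.symm


lemma eq_zero_of_card (μ : α →₀ ℕ) : Multiset.card μ.toMultiset = 0 → μ = 0 := by
  intro h
  rw [Multiset.card_eq_zero] at h
  apply toMultiset_inj
  simp [h]

lemma eq_single_of_card {α : Type*} (μ : α →₀ ℕ) (h : Multiset.card μ.toMultiset = 1) :
    ∃ c, μ = Finsupp.single c 1 := by
  rw [Multiset.card_eq_one] at h
  obtain ⟨c, hc⟩ := h
  refine ⟨c, toMultiset_inj ?_⟩
  rw [hc, Finsupp.toMultiset_single, one_smul]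

lemma eq_pair_of_card {α : Type*} (μ : α →₀ ℕ) (h : Multiset.card μ.toMultiset = 2) :
    ∃ c c', μ = Finsupp.single c 1 + Finsupp.single c' 1 := by
  rw [Multiset.card_eq_two] at h
  obtain ⟨c, c', hc⟩ := h
  refine ⟨c, c', toMultiset_inj ?_⟩
  rw [hc, Finsupp.toMultiset_add, Finsupp.toMultiset_single, Finsupp.toMultiset_single,
    one_smul, one_smul]
  rfl

lemma sol_zero (G : SimpleGraph V) (μ : G.edgeSet →₀ ℕ) (h : edeg G μ = 0) : μ = 0 := by
  apply eq_zero_of_card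
  have := card_edeg G μ
  rw [h] at this
  simpa using this.symm

lemma sol_single (G : SimpleGraph V) (μ : G.edgeSet →₀ ℕ) (e₀ : G.edgeSet)
    (h : edeg G μ = vmult (e₀ : Sym2 V)) : μ = Finsupp.single e₀ 1 := by
  have hc := card_edeg G μ
  rw [h, card_toMultiset_vmult] at hc
  obtain ⟨c, rfl⟩ := eq_single_of_card μ (by omega)
  rw [edeg_single, one_smul] at h
  have := vmult_injective h
  rw [Subtype.ext this]

lemma coeff_zero_toric (G : SimpleGraph V) {g : MvPolynomial G.edgeSet K}
    (hg : g ∈ toricIdeal K G) : coeff 0 g = 0 :=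
  coeff_toric_unique G hg 0 0 (by simp) (fun μ h => sol_zero G μ h)

lemma coeff_single_toric (G : SimpleGraph V) {g : MvPolynomial G.edgeSet K}
    (hg : g ∈ toricIdeal K G) (e : G.edgeSet) : coeff (Finsupp.single e 1) g = 0 :=
  coeff_toric_unique G hg (vmult (e : Sym2 V)) (Finsupp.single e 1)
    (by rw [edeg_single, one_smul]) (fun μ h => sol_single G μ e h)


/-- The key "missing-variable" vanishing lemma for extended toric ideals. -/
lemma coeff_extIdeal_vanish (G H : SimpleGraph V) (hle : H ≤ G) (e₀ : G.edgeSet)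
    (he₀ : (e₀ : Sym2 V) ∉ H.edgeSet) {h : MvPolynomial G.edgeSet K}
    (hh : h ∈ extIdeal K G H hle) :
    (∀ μ, Multiset.card μ.toMultiset ≤ 1 → coeff μ h = 0) ∧
    (∀ μ, μ e₀ ≠ 0 → Multiset.card μ.toMultiset ≤ 2 → coeff μ h = 0) := by
  classical
  have hmap : extIdeal K G H hle = Ideal.span
      ((MvPolynomial.rename (Set.inclusion (SimpleGraph.edgeSet_mono hle)) :
        MvPolynomial H.edgeSet K →ₐ[K] MvPolynomial G.edgeSet K) '' (toricIdeal K H)) := rfl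
  rw [hmap] at hh
  set f := Set.inclusion (SimpleGraph.edgeSet_mono hle) with hf
  refine Submodule.span_induction (p := fun x _ =>
    (∀ μ, Multiset.card μ.toMultiset ≤ 1 → coeff μ x = 0) ∧
    (∀ μ, μ e₀ ≠ 0 → Multiset.card μ.toMultiset ≤ 2 → coeff μ x = 0)) ?_ ?_ ?_ ?_ hh
  · rintro x ⟨g, hg, rfl⟩
    constructor
    · intro μ hcard
      apply coeff_rename_eq_zero
      intro τ hτ
      have hcards : Multiset.card τ.toMultiset = Multiset.card μ.toMultiset := by
        rw [← hτ, ← Finsupp.toMultiset_map, Multiset.card_map]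
      interval_cases hm : Multiset.card μ.toMultiset
      · rw [eq_zero_of_card τ (by omega)]
        exact coeff_zero_toric H hg
      · obtain ⟨c, rfl⟩ := eq_single_of_card τ (by omega)
        exact coeff_single_toric H hg c
    · intro μ hμ hcard
      apply coeff_rename_eq_zero
      intro τ hτ
      exfalso
      apply hμ
      rw [← hτ]
      apply Finsupp.mapDomain_notin_range
      rw [hf, Set.range_inclusion]
      exact he₀
  · constructor <;> intro μ <;> simp
  · rintro x y hx hy ⟨hx1, hx2⟩ ⟨hy1, hy2⟩
    constructor
    · intro μ hcard
      rw [coeff_add, hx1 μ hcard, hy1 μ hcard, add_zero]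
    · intro μ hμ hcard
      rw [coeff_add, hx2 μ hμ hcard, hy2 μ hμ hcard, add_zero]
  · rintro a x hx ⟨hx1, hx2⟩
    rw [smul_eq_mul]
    constructor
    · intro μ hcard
      rw [coeff_mul]
      apply Finset.sum_eq_zero
      rintro ⟨i, j⟩ hij
      rw [Finset.HasAntidiagonal.mem_antidiagonal] at hij
      have hcards : Multiset.card i.toMultiset + Multiset.card j.toMultiset =
          Multiset.card μ.toMultiset := by
        rw [← Multiset.card_add, ← Finsupp.toMultiset_add, hij]
      rw [hx1 j (by omega), mul_zero]
    · intro μ hμ hcard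
      rw [coeff_mul]
      apply Finset.sum_eq_zero
      rintro ⟨i, j⟩ hij
      rw [Finset.HasAntidiagonal.mem_antidiagonal] at hij
      have hcards : Multiset.card i.toMultiset + Multiset.card j.toMultiset =
          Multiset.card μ.toMultiset := by
        rw [← Multiset.card_add, ← Finsupp.toMultiset_add, hij]
      by_cases hje : j e₀ ≠ 0
      · rw [hx2 j hje (by omega), mul_zero]
      · have hie : i e₀ ≠ 0 := by
          push_neg at hje
          have := Finsupp.add_apply i j e₀
          rw [hij] at this
          omega
        have hipos : 1 ≤ Multiset.card i.toMultiset := by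
          rcases Nat.eq_zero_or_pos (Multiset.card i.toMultiset) with h0 | h1
          · exfalso; apply hie; rw [eq_zero_of_card i h0]; simp
          · exact h1
        rw [hx1 j (by omega), mul_zero]

lemma extIdeal_le_toricIdeal (G H : SimpleGraph V) (hle : H ≤ G) :
    extIdeal K G H hle ≤ toricIdeal K G := by
  rw [extIdeal, Ideal.map_le_iff_le_comap]
  intro g hg
  rw [Ideal.mem_comap, toricIdeal, RingHom.mem_ker]
  show (aeval fun e : G.edgeSet => edgeMon K (e : Sym2 V))
    ((rename (Set.inclusion (SimpleGraph.edgeSet_mono hle))) g) = 0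
  rw [aeval_rename]
  have : ((fun e : G.edgeSet => edgeMon K (e : Sym2 V)) ∘
      Set.inclusion (SimpleGraph.edgeSet_mono hle)) =
      fun e : H.edgeSet => edgeMon K (e : Sym2 V) := by
    funext x
    simp [Set.coe_inclusion]
  rw [this]
  rwa [toricIdeal, RingHom.mem_ker] at hg

lemma extIdeal_self (G : SimpleGraph V) (hle : G ≤ G) :
    extIdeal K G G hle = toricIdeal K G := by
  have hincl : Set.inclusion (SimpleGraph.edgeSet_mono hle) = (id : G.edgeSet → G.edgeSet) := by
    funext x
    exact Subtype.ext rfl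
  have hfun : ⇑(MvPolynomial.rename (Set.inclusion (SimpleGraph.edgeSet_mono hle)) :
      MvPolynomial G.edgeSet K →ₐ[K] MvPolynomial G.edgeSet K) = id := by
    funext p
    show rename _ p = p
    rw [hincl, rename_id, AlgHom.id_apply]
  show Ideal.span _ = _
  rw [hfun, Set.image_id, Ideal.span_eq]


lemma triple_match {w y z x1 x2 x3 : V}
    (h : (w ::ₘ y ::ₘ z ::ₘ 0) = ({x1, x2, x3} : Multiset V)) :
    (w = x1 ∧ s(y, z) = s(x2, x3)) ∨ (w = x2 ∧ s(y, z) = s(x1, x3)) ∨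
      (w = x3 ∧ s(y, z) = s(x1, x2)) := by
  have hshow1 : ({x1, x2, x3} : Multiset V) = x1 ::ₘ ({x2, x3} : Multiset V) := rfl
  have hshow2 : ({x1, x2, x3} : Multiset V) = x2 ::ₘ ({x1, x3} : Multiset V) := by
    show x1 ::ₘ x2 ::ₘ x3 ::ₘ 0 = x2 ::ₘ x1 ::ₘ x3 ::ₘ 0
    exact Multiset.cons_swap x1 x2 _
  have hshow3 : ({x1, x2, x3} : Multiset V) = x3 ::ₘ ({x1, x2} : Multiset V) := by
    show x1 ::ₘ x2 ::ₘ x3 ::ₘ 0 = x3 ::ₘ x1 ::ₘ x2 ::ₘ 0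
    rw [Multiset.cons_swap x2 x3, Multiset.cons_swap x1 x3]
  have hw : w ∈ ({x1, x2, x3} : Multiset V) := by
    rw [← h]; exact Multiset.mem_cons_self _ _
  simp only [Multiset.insert_eq_cons, Multiset.mem_cons, Multiset.mem_singleton] at hw
  rcases hw with rfl | rfl | rfl
  · left
    refine ⟨rfl, ?_⟩
    rw [hshow1, Multiset.cons_inj_right] at h
    exact pair_eq_of_multiset h
  · right; left
    refine ⟨rfl, ?_⟩
    rw [hshow2, Multiset.cons_inj_right] at h
    exact pair_eq_of_multiset h
  · right; right
    refine ⟨rfl, ?_⟩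
    rw [hshow3, Multiset.cons_inj_right] at h
    exact pair_eq_of_multiset h

lemma quad_match {u w u' w' p q a b : V}
    (h : (u ::ₘ w ::ₘ u' ::ₘ w' ::ₘ 0) = ({p, q, a, b} : Multiset V)) :
    (s(u, w) = s(p, q) ∧ s(u', w') = s(a, b)) ∨
    (s(u, w) = s(p, a) ∧ s(u', w') = s(q, b)) ∨
    (s(u, w) = s(p, b) ∧ s(u', w') = s(q, a)) ∨
    (s(u', w') = s(p, q) ∧ s(u, w) = s(a, b)) ∨
    (s(u', w') = s(p, a) ∧ s(u, w) = s(q, b)) ∨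
    (s(u', w') = s(p, b) ∧ s(u, w) = s(q, a)) := by
  have hp : ({p, q, a, b} : Multiset V) = p ::ₘ ({q, a, b} : Multiset V) := rfl
  have hq : ({p, q, a, b} : Multiset V) = q ::ₘ ({p, a, b} : Multiset V) := by
    show p ::ₘ q ::ₘ a ::ₘ b ::ₘ 0 = q ::ₘ p ::ₘ a ::ₘ b ::ₘ 0
    exact Multiset.cons_swap p q _
  have ha : ({p, q, a, b} : Multiset V) = a ::ₘ ({p, q, b} : Multiset V) := by
    show p ::ₘ q ::ₘ a ::ₘ b ::ₘ 0 = a ::ₘ p ::ₘ q ::ₘ b ::ₘ 0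
    rw [Multiset.cons_swap q a, Multiset.cons_swap p a]
  have hb : ({p, q, a, b} : Multiset V) = b ::ₘ ({p, q, a} : Multiset V) := by
    show p ::ₘ q ::ₘ a ::ₘ b ::ₘ 0 = b ::ₘ p ::ₘ q ::ₘ a ::ₘ 0
    rw [Multiset.cons_swap a b, Multiset.cons_swap q b, Multiset.cons_swap p b]
  have hu : u ∈ ({p, q, a, b} : Multiset V) := by
    rw [← h]; exact Multiset.mem_cons_self _ _
  simp only [Multiset.insert_eq_cons, Multiset.mem_cons, Multiset.mem_singleton] at hu
  rcases hu with rfl | rfl | rfl | rfl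
  · rw [hp, Multiset.cons_inj_right] at h
    rcases triple_match h with ⟨rfl, h2⟩ | ⟨rfl, h2⟩ | ⟨rfl, h2⟩
    · exact Or.inl ⟨rfl, h2⟩
    · exact Or.inr (Or.inl ⟨rfl, h2⟩)
    · exact Or.inr (Or.inr (Or.inl ⟨rfl, h2⟩))
  · rw [hq, Multiset.cons_inj_right] at h
    rcases triple_match h with ⟨rfl, h2⟩ | ⟨rfl, h2⟩ | ⟨rfl, h2⟩
    · exact Or.inl ⟨Sym2.eq_swap, h2⟩
    · exact Or.inr (Or.inr (Or.inr (Or.inr (Or.inr ⟨h2, rfl⟩))))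
    · exact Or.inr (Or.inr (Or.inr (Or.inr (Or.inl ⟨h2, rfl⟩))))
  · rw [ha, Multiset.cons_inj_right] at h
    rcases triple_match h with ⟨rfl, h2⟩ | ⟨rfl, h2⟩ | ⟨rfl, h2⟩
    · exact Or.inr (Or.inl ⟨Sym2.eq_swap, h2⟩)
    · exact Or.inr (Or.inr (Or.inr (Or.inr (Or.inr ⟨h2, Sym2.eq_swap⟩))))
    · exact Or.inr (Or.inr (Or.inr (Or.inl ⟨h2, rfl⟩)))
  · rw [hb, Multiset.cons_inj_right] at h
    rcases triple_match h with ⟨rfl, h2⟩ | ⟨rfl, h2⟩ | ⟨rfl, h2⟩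
    · exact Or.inr (Or.inr (Or.inl ⟨Sym2.eq_swap, h2⟩))
    · exact Or.inr (Or.inr (Or.inr (Or.inr (Or.inl ⟨h2, Sym2.eq_swap⟩))))
    · exact Or.inr (Or.inr (Or.inr (Or.inl ⟨h2, Sym2.eq_swap⟩)))


/-- the edge `{u,w}` of the complete graph, as an element of its edge set -/
def vE {u w : V} (h : u ≠ w) : (⊤ : SimpleGraph V).edgeSet :=
  ⟨s(u, w), by rw [SimpleGraph.mem_edgeSet]; exact h⟩

@[simp] lemma vE_coe {u w : V} (h : u ≠ w) : ((vE h : (⊤ : SimpleGraph V).edgeSet) : Sym2 V) = s(u, w) := rfl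

lemma top_edge_repr (c : (⊤ : SimpleGraph V).edgeSet) :
    ∃ u w, ∃ h : u ≠ w, c = vE h := by
  obtain ⟨e, he⟩ := c
  induction e with
  | _ u w =>
    rw [SimpleGraph.mem_edgeSet] at he
    exact ⟨u, w, he, rfl⟩

lemma sol_matching {p q a b : V} (hpq : p ≠ q) (hpa : p ≠ a) (hpb : p ≠ b)
    (hqa : q ≠ a) (hqb : q ≠ b) (hab : a ≠ b) (μ : (⊤ : SimpleGraph V).edgeSet →₀ ℕ)
    (h : edeg ⊤ μ = Finsupp.single p 1 + Finsupp.single q 1 +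
      Finsupp.single a 1 + Finsupp.single b 1) :
    μ = Finsupp.single (vE hpq) 1 + Finsupp.single (vE hab) 1 ∨
    μ = Finsupp.single (vE hpa) 1 + Finsupp.single (vE hqb) 1 ∨
    μ = Finsupp.single (vE hpb) 1 + Finsupp.single (vE hqa) 1 := by
  classical
  have hmT : (Finsupp.single p 1 + Finsupp.single q 1 + Finsupp.single a 1 +
      Finsupp.single b 1 : V →₀ ℕ).toMultiset = ({p, q, a, b} : Multiset V) := by
    simp [Finsupp.toMultiset_add, Finsupp.toMultiset_single]
  have hcard : Multiset.card μ.toMultiset = 2 := by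
    have h1 := card_edeg ⊤ μ
    rw [h] at h1
    have h2 : Multiset.card (Finsupp.single p 1 + Finsupp.single q 1 +
        Finsupp.single a 1 + Finsupp.single b 1 : V →₀ ℕ).toMultiset = 4 := by
      rw [hmT]; rfl
    omega
  obtain ⟨c, c', rfl⟩ := eq_pair_of_card μ hcard
  obtain ⟨u, w, huw, rfl⟩ := top_edge_repr c
  obtain ⟨u', w', hu'w', rfl⟩ := top_edge_repr c'
  rw [edeg_add, edeg_single, edeg_single, one_smul, one_smul] at h
  have hmult := congrArg Finsupp.toMultiset h
  rw [Finsupp.toMultiset_add, hmT, vE_coe, vE_coe, toMultiset_vmult, toMultiset_vmult] at hmult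
  have hmult' : (u ::ₘ w ::ₘ u' ::ₘ w' ::ₘ 0) = ({p, q, a, b} : Multiset V) := by
    rw [← hmult]; rfl
  rcases quad_match hmult' with ⟨h1, h2⟩ | ⟨h1, h2⟩ | ⟨h1, h2⟩ | ⟨h1, h2⟩ | ⟨h1, h2⟩ | ⟨h1, h2⟩
  · exact Or.inl (by rw [show vE huw = vE hpq from Subtype.ext h1,
      show vE hu'w' = vE hab from Subtype.ext h2])
  · exact Or.inr (Or.inl (by rw [show vE huw = vE hpa from Subtype.ext h1,
      show vE hu'w' = vE hqb from Subtype.ext h2]))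
  · exact Or.inr (Or.inr (by rw [show vE huw = vE hpb from Subtype.ext h1,
      show vE hu'w' = vE hqa from Subtype.ext h2]))
  · exact Or.inl (by rw [show vE hu'w' = vE hpq from Subtype.ext h1,
      show vE huw = vE hab from Subtype.ext h2, add_comm])
  · exact Or.inr (Or.inl (by rw [show vE hu'w' = vE hpa from Subtype.ext h1,
      show vE huw = vE hqb from Subtype.ext h2, add_comm]))
  · exact Or.inr (Or.inr (by rw [show vE hu'w' = vE hpb from Subtype.ext h1,
      show vE huw = vE hqa from Subtype.ext h2, add_comm]))


lemma X_mul_X_monomial {σ : Type} (e f : σ) :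
    (X e * X f : MvPolynomial σ K) = monomial (Finsupp.single e 1 + Finsupp.single f 1) 1 := by
  have hX : ∀ v : σ, (X v : MvPolynomial σ K) = monomial (Finsupp.single v 1) 1 := by
    intro v; rw [← X_pow_eq_monomial, pow_one]
  rw [hX, hX, monomial_mul, one_mul]

lemma pair_ne_pair {E : Type} (c c' d d' : E) (h1 : c ≠ d) (h2 : c ≠ d') :
    (Finsupp.single c 1 + Finsupp.single c' 1 : E →₀ ℕ) ≠
      Finsupp.single d 1 + Finsupp.single d' 1 := by
  classical
  intro h
  have hc := DFunLike.congr_fun h c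
  simp only [Finsupp.add_apply, Finsupp.single_apply] at hc
  rw [if_pos trivial, if_neg (Ne.symm h1), if_neg (Ne.symm h2)] at hc
  split_ifs at hc <;> omega

lemma pair_apply_self {E : Type} (c c' : E) :
    (Finsupp.single c 1 + Finsupp.single c' 1 : E →₀ ℕ) c ≠ 0 := by
  classical
  rw [Finsupp.add_apply, Finsupp.single_eq_same]
  omega

lemma pair_apply_self' {E : Type} (c c' : E) :
    (Finsupp.single c 1 + Finsupp.single c' 1 : E →₀ ℕ) c' ≠ 0 := by
  classical
  rw [Finsupp.add_apply, Finsupp.single_eq_same]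
  omega

lemma pair_card {E : Type} (c c' : E) :
    Multiset.card (Finsupp.single c 1 + Finsupp.single c' 1 : E →₀ ℕ).toMultiset = 2 := by
  rw [Finsupp.toMultiset_add, Multiset.card_add, Finsupp.toMultiset_single,
    Finsupp.toMultiset_single]
  simp

lemma master (H₁ H₂ : SimpleGraph V) {p q a b : V} (hpq : p ≠ q) (hpa : p ≠ a)
    (hpb : p ≠ b) (hqa : q ≠ a) (hqb : q ≠ b) (hab : a ≠ b)
    (hsum : toricIdeal K (⊤ : SimpleGraph V) =
      extIdeal K ⊤ H₁ le_top + extIdeal K ⊤ H₂ le_top)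
    (h2m : s(p, q) ∉ H₂.edgeSet)
    (h1m : s(p, q) ∉ H₁.edgeSet ∨ s(a, b) ∉ H₁.edgeSet ∨
      (s(p, a) ∉ H₁.edgeSet ∧ s(p, b) ∉ H₁.edgeSet)) : False := by
  classical
  set epq : (⊤ : SimpleGraph V).edgeSet := vE hpq with hepq
  set eab : (⊤ : SimpleGraph V).edgeSet := vE hab with heab
  set epa : (⊤ : SimpleGraph V).edgeSet := vE hpa with hepa
  set eqb : (⊤ : SimpleGraph V).edgeSet := vE hqb with heqb
  set epb : (⊤ : SimpleGraph V).edgeSet := vE hpb with hepb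
  set eqa : (⊤ : SimpleGraph V).edgeSet := vE hqa with heqa
  -- pairwise distinctness of relevant edges
  have hS : ∀ (u w y z : V) (h : u ≠ w) (h' : y ≠ z), s(u,w) ≠ s(y,z) → vE h ≠ vE h' :=
    fun u w y z h h' hne he => hne (congrArg Subtype.val he)
  have ne1 : epq ≠ eab := hS _ _ _ _ _ _ (by rw [Ne, Sym2.eq_iff]; tauto)
  have ne2 : epq ≠ epa := hS _ _ _ _ _ _ (by rw [Ne, Sym2.eq_iff]; tauto)
  have ne3 : epq ≠ eqb := hS _ _ _ _ _ _ (by rw [Ne, Sym2.eq_iff]; tauto)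
  have ne4 : epq ≠ epb := hS _ _ _ _ _ _ (by rw [Ne, Sym2.eq_iff]; tauto)
  have ne5 : epq ≠ eqa := hS _ _ _ _ _ _ (by rw [Ne, Sym2.eq_iff]; tauto)
  have ne6 : epa ≠ eqb := hS _ _ _ _ _ _ (by rw [Ne, Sym2.eq_iff]; tauto)
  have ne7 : epa ≠ epb := hS _ _ _ _ _ _ (by rw [Ne, Sym2.eq_iff]; tauto)
  have ne8 : epa ≠ eqa := hS _ _ _ _ _ _ (by rw [Ne, Sym2.eq_iff]; tauto)
  have ne9 : epb ≠ eqa := hS _ _ _ _ _ _ (by rw [Ne, Sym2.eq_iff]; tauto)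
  have ne10 : epa ≠ eab := hS _ _ _ _ _ _ (by rw [Ne, Sym2.eq_iff]; tauto)
  set μ1 : (⊤ : SimpleGraph V).edgeSet →₀ ℕ := Finsupp.single epq 1 + Finsupp.single eab 1
    with hμ1
  set μ2 : (⊤ : SimpleGraph V).edgeSet →₀ ℕ := Finsupp.single epa 1 + Finsupp.single eqb 1
    with hμ2
  set μ3 : (⊤ : SimpleGraph V).edgeSet →₀ ℕ := Finsupp.single epb 1 + Finsupp.single eqa 1
    with hμ3
  set B : MvPolynomial (⊤ : SimpleGraph V).edgeSet K := X epq * X eab - X epa * X eqb with hB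
  have hedge : ∀ u w : V, edgeMon K s(u, w) = X u * X w := fun u w => by simp [edgeMon]
  have hBI : B ∈ toricIdeal K (⊤ : SimpleGraph V) := by
    rw [toricIdeal, RingHom.mem_ker]
    rw [hB, map_sub, map_mul, map_mul, aeval_X, aeval_X, aeval_X, aeval_X]
    rw [hepq, heab, hepa, heqb]
    rw [vE_coe, vE_coe, vE_coe, vE_coe]  -- might not be needed as coe is rfl
    rw [hedge, hedge, hedge, hedge]
    ring
  have hcoeffB : coeff μ1 B = 1 := by
    rw [hB, coeff_sub, X_mul_X_monomial, X_mul_X_monomial, coeff_monomial, coeff_monomial,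
      if_pos rfl, if_neg (pair_ne_pair epa eqb epq eab (Ne.symm ne2) ne10)]
    simp
  rw [hsum, Submodule.add_eq_sup] at hBI
  obtain ⟨h1p, hh1, h2p, hh2, hsum'⟩ := Submodule.mem_sup.mp hBI
  have hc2 : coeff μ1 h2p = 0 := by
    refine (coeff_extIdeal_vanish ⊤ H₂ le_top epq h2m hh2).2 μ1 ?_ ?_
    · rw [hμ1]; exact pair_apply_self _ _
    · rw [hμ1]; rw [pair_card]
  have hc1 : coeff μ1 h1p = 0 := by
    rcases h1m with hm | hm | ⟨hm1, hm2⟩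
    · refine (coeff_extIdeal_vanish ⊤ H₁ le_top epq hm hh1).2 μ1 ?_ ?_
      · rw [hμ1]; exact pair_apply_self _ _
      · rw [hμ1]; rw [pair_card]
    · refine (coeff_extIdeal_vanish ⊤ H₁ le_top eab hm hh1).2 μ1 ?_ ?_
      · rw [hμ1]; exact pair_apply_self' _ _
      · rw [hμ1]; rw [pair_card]
    · have hμ2c : coeff μ2 h1p = 0 := by
        refine (coeff_extIdeal_vanish ⊤ H₁ le_top epa hm1 hh1).2 μ2 ?_ ?_
        · rw [hμ2]; exact pair_apply_self _ _
        · rw [hμ2]; rw [pair_card]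
      have hμ3c : coeff μ3 h1p = 0 := by
        refine (coeff_extIdeal_vanish ⊤ H₁ le_top epb hm2 hh1).2 μ3 ?_ ?_
        · rw [hμ3]; exact pair_apply_self _ _
        · rw [hμ3]; rw [pair_card]
      have hed : ∀ (c c' : (⊤ : SimpleGraph V).edgeSet),
          edeg ⊤ (Finsupp.single c 1 + Finsupp.single c' 1) =
            vmult (c : Sym2 V) + vmult (c' : Sym2 V) := by
        intro c c'
        rw [edeg_add, edeg_single, edeg_single, one_smul, one_smul]
      have hlam := coeff_toric_triple (⊤ : SimpleGraph V)
        (extIdeal_le_toricIdeal ⊤ H₁ le_top hh1)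
        (Finsupp.single p 1 + Finsupp.single q 1 + Finsupp.single a 1 + Finsupp.single b 1)
        μ1 μ2 μ3
        (by rw [hμ1, hed]; rw [hepq, heab, vE_coe, vE_coe, vmult_mk, vmult_mk]; abel)
        (by rw [hμ2, hed]; rw [hepa, heqb, vE_coe, vE_coe, vmult_mk, vmult_mk]; abel)
        (by rw [hμ3, hed]; rw [hepb, heqa, vE_coe, vE_coe, vmult_mk, vmult_mk]; abel)
        (pair_ne_pair epq eab epa eqb ne2 ne3)
        (pair_ne_pair epq eab epb eqa ne4 ne5)
        (pair_ne_pair epa eqb epb eqa ne7 ne8)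
        (fun μ h => sol_matching hpq hpa hpb hqa hqb hab μ h)
      rw [hμ2c, hμ3c, add_zero, add_zero] at hlam
      exact hlam
  have hfin := congrArg (coeff μ1) hsum'
  rw [coeff_add, hc1, hc2, add_zero, hcoeffB] at hfin
  exact one_ne_zero hfin.symm


lemma two_more {n : ℕ} (hn : 4 ≤ n) (p q : Fin n) :
    ∃ a b : Fin n, a ≠ b ∧ a ≠ p ∧ a ≠ q ∧ b ≠ p ∧ b ≠ q := by
  have hcard : 1 < (({p, q}ᶜ : Finset (Fin n))).card := by
    have h1 : ({p, q} : Finset (Fin n)).card ≤ 2 := by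
      apply le_trans (Finset.card_insert_le _ _)
      simp
    rw [Finset.card_compl, Fintype.card_fin]
    omega
  obtain ⟨a, ha, b, hb, hab⟩ := Finset.one_lt_card.mp hcard
  simp only [Finset.mem_compl, Finset.mem_insert, Finset.mem_singleton, not_or] at ha hb
  exact ⟨a, b, hab, ha.1, ha.2, hb.1, hb.2⟩

lemma side_bound {n : ℕ} (hn : 4 ≤ n) (H₁ H₂ : SimpleGraph (Fin n))
    (hsum : toricIdeal K (⊤ : SimpleGraph (Fin n)) =
      extIdeal K ⊤ H₁ le_top + extIdeal K ⊤ H₂ le_top)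
    (hne2 : extIdeal K ⊤ H₂ le_top ≠ toricIdeal K ⊤) :
    ((⊤ : SimpleGraph (Fin n)).edgeSet \ H₁.edgeSet).ncard ≤ 2 := by
  by_contra hcon
  push_neg at hcon
  obtain ⟨t, hts, htc⟩ := Set.exists_subset_card_eq (show 3 ≤ _ from hcon)
  rw [Set.ncard_eq_three] at htc
  obtain ⟨e1, e2, e3, h12, h13, h23, rfl⟩ := htc
  have hm1 := hts (show e1 ∈ ({e1, e2, e3} : Set (Sym2 (Fin n))) by simp)
  have hm2 := hts (show e2 ∈ ({e1, e2, e3} : Set (Sym2 (Fin n))) by simp)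
  have hm3 := hts (show e3 ∈ ({e1, e2, e3} : Set (Sym2 (Fin n))) by simp)
  -- get an edge missing from H₂
  have hH2ne : H₂.edgeSet ≠ (⊤ : SimpleGraph (Fin n)).edgeSet := by
    intro h
    apply hne2
    have hH2 : H₂ = ⊤ := SimpleGraph.edgeSet_inj.mp h
    subst hH2
    exact extIdeal_self ⊤ le_top
  obtain ⟨f, hf_top, hf_miss⟩ : ∃ f, f ∈ (⊤ : SimpleGraph (Fin n)).edgeSet ∧
      f ∉ H₂.edgeSet := by
    obtain ⟨x, hx1, hx2⟩ := Set.exists_of_ssubset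
      (ssubset_of_subset_of_ne (SimpleGraph.edgeSet_mono le_top) hH2ne)
    exact ⟨x, hx1, hx2⟩
  obtain ⟨p, q, hpq, hfc⟩ := top_edge_repr (V := Fin n) ⟨f, hf_top⟩
  have hfeq : f = s(p, q) := congrArg Subtype.val hfc
  subst hfeq
  have hf_miss' : s(q, p) ∉ H₂.edgeSet := by rwa [Sym2.eq_swap]
  have hclass : ∀ e, e ∈ (⊤ : SimpleGraph (Fin n)).edgeSet → e ∉ H₁.edgeSet →
      ∃ x, x ≠ p ∧ x ≠ q ∧ (e = s(p, x) ∨ e = s(q, x)) := by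
    intro e he hme
    obtain ⟨u, v, huv, hec⟩ := top_edge_repr (V := Fin n) ⟨e, he⟩
    have heeq : e = s(u, v) := congrArg Subtype.val hec
    subst heeq
    by_cases hup : u = p
    · subst hup
      by_cases hvq : v = q
      · subst hvq
        exfalso
        obtain ⟨a, b, hab, hap, haq, hbp, hbq⟩ := two_more hn u v
        exact master H₁ H₂ huv (Ne.symm hap) (Ne.symm hbp) (Ne.symm haq) (Ne.symm hbq) hab
          hsum hf_miss (Or.inl hme)
      · exact ⟨v, Ne.symm huv, hvq, Or.inl rfl⟩
    · by_cases huq : u = q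
      · by_cases hvp : v = p
        · exfalso
          have hme' : s(p, q) ∉ H₁.edgeSet := by
            rw [← hvp, ← huq, Sym2.eq_swap]
            exact hme
          obtain ⟨a, b, hab, hap, haq, hbp, hbq⟩ := two_more hn p q
          exact master H₁ H₂ hpq (Ne.symm hap) (Ne.symm hbp) (Ne.symm haq)
            (Ne.symm hbq) hab hsum hf_miss (Or.inl hme')
        · exact ⟨v, hvp, fun h => huv (huq.trans h.symm), Or.inr (by rw [huq])⟩
      · by_cases hvp : v = p
        · subst hvp
          exact ⟨u, hup, huq, Or.inl (Sym2.eq_swap)⟩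
        · by_cases hvq : v = q
          · subst hvq
            exact ⟨u, hup, huq, Or.inr (Sym2.eq_swap)⟩
          · exfalso
            have hme' : s(u, v) ∉ H₁.edgeSet := hme
            exact master H₁ H₂ hpq (Ne.symm hup) (Ne.symm hvp) (Ne.symm huq) (Ne.symm hvq)
              huv hsum hf_miss (Or.inr (Or.inl hme'))
  have hfin : ∀ (P Q : Fin n), P ≠ Q → s(P, Q) ∉ H₂.edgeSet →
      ∀ x y : Fin n, x ≠ P → x ≠ Q → y ≠ P → y ≠ Q → s(P, x) ∉ H₁.edgeSet →
      s(P, y) ∉ H₁.edgeSet → s(P, x) ≠ s(P, y) → False := by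
    intro P Q hPQ hPQm x y hxP hxQ hyP hyQ hmx hmy hne
    have hxy : x ≠ y := fun h => hne (by rw [h])
    exact master H₁ H₂ hPQ (Ne.symm hxP) (Ne.symm hyP) (Ne.symm hxQ) (Ne.symm hyQ) hxy
      hsum hPQm (Or.inr (Or.inr ⟨hmx, hmy⟩))
  obtain ⟨x1, hx1p, hx1q, hc1⟩ := hclass e1 hm1.1 hm1.2
  obtain ⟨x2, hx2p, hx2q, hc2⟩ := hclass e2 hm2.1 hm2.2
  obtain ⟨x3, hx3p, hx3q, hc3⟩ := hclass e3 hm3.1 hm3.2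
  have pairP : ∀ (xi xj : Fin n), xi ≠ p → xi ≠ q → xj ≠ p → xj ≠ q →
      s(p, xi) ∉ H₁.edgeSet → s(p, xj) ∉ H₁.edgeSet → s(p, xi) ≠ s(p, xj) → False :=
    fun xi xj h1 h2 h3 h4 h5 h6 h7 => hfin p q hpq hf_miss xi xj h1 h2 h3 h4 h5 h6 h7
  have pairQ : ∀ (xi xj : Fin n), xi ≠ p → xi ≠ q → xj ≠ p → xj ≠ q →
      s(q, xi) ∉ H₁.edgeSet → s(q, xj) ∉ H₁.edgeSet → s(q, xi) ≠ s(q, xj) → False :=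
    fun xi xj h1 h2 h3 h4 h5 h6 h7 =>
      hfin q p (Ne.symm hpq) hf_miss' xi xj h2 h1 h4 h3 h5 h6 h7
  rcases hc1 with hc1 | hc1 <;> rcases hc2 with hc2 | hc2 <;> rcases hc3 with hc3 | hc3
  · exact pairP x1 x2 hx1p hx1q hx2p hx2q (hc1 ▸ hm1.2) (hc2 ▸ hm2.2) (by rw [← hc1, ← hc2]; exact h12)
  · exact pairP x1 x2 hx1p hx1q hx2p hx2q (hc1 ▸ hm1.2) (hc2 ▸ hm2.2) (by rw [← hc1, ← hc2]; exact h12)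
  · exact pairP x1 x3 hx1p hx1q hx3p hx3q (hc1 ▸ hm1.2) (hc3 ▸ hm3.2) (by rw [← hc1, ← hc3]; exact h13)
  · exact pairQ x2 x3 hx2p hx2q hx3p hx3q (hc2 ▸ hm2.2) (hc3 ▸ hm3.2) (by rw [← hc2, ← hc3]; exact h23)
  · exact pairP x2 x3 hx2p hx2q hx3p hx3q (hc2 ▸ hm2.2) (hc3 ▸ hm3.2) (by rw [← hc2, ← hc3]; exact h23)
  · exact pairQ x1 x3 hx1p hx1q hx3p hx3q (hc1 ▸ hm1.2) (hc3 ▸ hm3.2) (by rw [← hc1, ← hc3]; exact h13)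
  · exact pairQ x1 x2 hx1p hx1q hx2p hx2q (hc1 ▸ hm1.2) (hc2 ▸ hm2.2) (by rw [← hc1, ← hc2]; exact h12)
  · exact pairQ x1 x2 hx1p hx1q hx2p hx2q (hc1 ▸ hm1.2) (hc2 ▸ hm2.2) (by rw [← hc1, ← hc2]; exact h12)

end Aux

/-- Let `n ≥ 4` and let `I_{K_n} = I_{G₁} + I_{G₂}` be a subgraph
splitting of the toric ideal of the complete graph `K_n`.  Then each of `G₁`, `G₂`
contains all edges of `K_n` except at most two. -/
theorem completeGraph_splitting_missing_at_most_two_edges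
    (K : Type) [Field K] (n : ℕ) (hn : 4 ≤ n) (G₁ G₂ : SimpleGraph (Fin n))
    (hsplit : IsSubgraphSplitting K (⊤ : SimpleGraph (Fin n)) G₁ G₂ le_top le_top) :
    ((⊤ : SimpleGraph (Fin n)).edgeSet \ G₁.edgeSet).ncard ≤ 2 ∧
      ((⊤ : SimpleGraph (Fin n)).edgeSet \ G₂.edgeSet).ncard ≤ 2 := by
  obtain ⟨heq, hne1, hne2⟩ := hsplit
  constructor
  · exact side_bound hn G₁ G₂ heq hne2
  · have hsum' : toricIdeal K (⊤ : SimpleGraph (Fin n)) =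
        extIdeal K ⊤ G₂ le_top + extIdeal K ⊤ G₁ le_top := by
      rw [heq]; exact add_comm _ _
    exact side_bound hn G₂ G₁ hsum' hne1
end

section
/- Let K be a field, n ≥ 4 an integer, and w = (a, b, c, d) a cycle of length 4 in the complete graph K_n (with a, b, c, d its four consecutive edges). Then each of I_{K_n} = I_{K_n∖a} + I_{K_n∖b}, I_{K_n} = I_{K_n∖{a,c}} + I_{K_n∖b}, and I_{K_n} = I_{K_n∖a} + I_{K_n∖{b,d}} holds and is a subgraph splitting of I_{K_n} (in each case both summand ideals are different from I_{K_n}). -/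
open MvPolynomial

set_option linter.unusedVariables false
set_option linter.unusedSectionVars false
set_option maxHeartbeats 1600000

namespace TS

variable (K : Type) [Field K]

lemma edgeMon_mk {V : Type} (u v : V) : edgeMon K s(u, v) = X u * X v := rfl

def e2m {V : Type} : Sym2 V → Multiset V :=
  Sym2.lift ⟨fun u v => {u, v}, fun u v => Multiset.cons_swap u v 0⟩

lemma e2m_mk {V : Type} (u v : V) : e2m s(u, v) = {u, v} := rfl

lemma exists_mk {V : Type} (e : Sym2 V) : ∃ x y, e = s(x, y) :=
  Sym2.ind (fun x y => ⟨x, y, rfl⟩) e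

lemma mem_e2m {V : Type} {e : Sym2 V} {u : V} (h : u ∈ e2m e) : ∃ v, e = s(u, v) := by
  induction e using Sym2.ind with
  | _ x y =>
    rw [e2m_mk] at h
    rcases Multiset.mem_cons.1 h with h | h
    · subst h; exact ⟨y, rfl⟩
    · rw [Multiset.mem_singleton] at h; subst h; exact ⟨x, Sym2.eq_swap⟩

lemma left_mem_e2m {V : Type} (u v : V) : u ∈ e2m s(u, v) := by
  rw [e2m_mk]; exact Multiset.mem_cons_self _ _

lemma right_mem_e2m {V : Type} (u v : V) : v ∈ e2m s(u, v) := by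
  rw [e2m_mk]; exact Multiset.mem_cons.2 (Or.inr (Multiset.mem_singleton.2 rfl))

variable {V : Type} [DecidableEq V] {σ : Type} [DecidableEq σ]

noncomputable def XM (M : Multiset σ) : MvPolynomial σ K :=
  monomial (Multiset.toFinsupp M) 1

def DM (f : σ → Sym2 V) (M : Multiset σ) : Multiset V := (M.map f).bind e2m

lemma XM_add (M N : Multiset σ) : XM K (M + N) = XM K M * XM K N := by
  simp [XM, monomial_mul]

lemma XM_zero : XM K (0 : Multiset σ) = 1 := by
  simp [XM]

lemma XM_singleton (a : σ) : XM K ({a} : Multiset σ) = X a := by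
  simp [XM, X, Multiset.toFinsupp_singleton]

lemma DM_add (f : σ → Sym2 V) (M N : Multiset σ) :
    DM f (M + N) = DM f M + DM f N := by
  simp [DM, Multiset.add_bind]

lemma DM_cons (f : σ → Sym2 V) (a : σ) (M : Multiset σ) :
    DM f (a ::ₘ M) = e2m (f a) + DM f M := by
  simp [DM, Multiset.cons_bind]

lemma DM_singleton (f : σ → Sym2 V) (a : σ) : DM f ({a} : Multiset σ) = e2m (f a) := by
  simp [DM]

lemma edgeMon_eq_monomial (e : Sym2 V) :
    edgeMon K e = monomial (Multiset.toFinsupp (e2m e)) 1 := by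
  induction e using Sym2.ind with
  | _ u v =>
    have h : (Multiset.toFinsupp ({u, v} : Multiset V)) =
        Finsupp.single u 1 + Finsupp.single v 1 := by
      rw [Multiset.insert_eq_cons, ← Multiset.singleton_add, map_add]
      simp [Multiset.toFinsupp_singleton]
    rw [edgeMon_mk, e2m_mk, h, X, X, monomial_mul, one_mul]

lemma aeval_XM (f : σ → Sym2 V) (M : Multiset σ) :
    aeval (fun e => edgeMon K (f e)) (XM K M)
      = monomial (Multiset.toFinsupp (DM f M)) 1 := by
  induction M using Multiset.induction with
  | empty =>
    simp [XM_zero, DM]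
  | cons a s ih =>
    rw [← Multiset.singleton_add, XM_add, map_mul, XM_singleton, aeval_X, ih,
      edgeMon_eq_monomial, monomial_mul, one_mul, DM_add, DM_singleton, map_add]

lemma toFinsupp_map {τ : Type} [DecidableEq τ] (g : σ → τ) (M : Multiset σ) :
    Multiset.toFinsupp (M.map g) = Finsupp.mapDomain g (Multiset.toFinsupp M) := by
  induction M using Multiset.induction with
  | empty => simp
  | cons a s ih =>
    rw [Multiset.map_cons, ← Multiset.singleton_add, ← Multiset.singleton_add a s,
      map_add, map_add, Finsupp.mapDomain_add, ih]
    simp [Multiset.toFinsupp_singleton, Finsupp.mapDomain_single]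

lemma rename_XM {τ : Type} [DecidableEq τ] (g : σ → τ) (M : Multiset σ) :
    rename g (XM K M) = XM K (M.map g) := by
  rw [XM, rename_monomial, XM, toFinsupp_map]

lemma mem_span_binomials {G : SimpleGraph V} (fp : MvPolynomial G.edgeSet K)
    (hfp : fp ∈ toricIdeal K G) :
    fp ∈ Submodule.span K {g : MvPolynomial G.edgeSet K |
      ∃ M N : Multiset G.edgeSet,
        DM Subtype.val M = DM Subtype.val N ∧ g = XM K M - XM K N} := by
  classical
  set S : Set (MvPolynomial G.edgeSet K) := {g : MvPolynomial G.edgeSet K |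
      ∃ M N : Multiset G.edgeSet,
        DM Subtype.val M = DM Subtype.val N ∧ g = XM K M - XM K N} with hS
  suffices h : ∀ (m : ℕ) (fp : MvPolynomial G.edgeSet K), fp ∈ toricIdeal K G →
      fp.support.card ≤ m → fp ∈ Submodule.span K S by
    exact h fp.support.card fp hfp le_rfl
  intro m
  induction m with
  | zero =>
    intro fp hfp hm
    have h0 : fp = 0 := by
      rw [Nat.le_zero, Finset.card_eq_zero] at hm
      exact MvPolynomial.support_eq_empty.1 hm
    simp [h0]
  | succ m ih =>
    intro fp hfp hm
    by_cases h0 : fp = 0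
    · simp [h0]
    have hne : fp.support.Nonempty := by
      rwa [Finset.nonempty_iff_ne_empty, ne_eq, MvPolynomial.support_eq_empty]
    obtain ⟨U₀, hU₀⟩ := hne
    set c₀ := coeff U₀ fp with hc₀def
    have hc₀ : c₀ ≠ 0 := MvPolynomial.mem_support_iff.1 hU₀
    set Dex : (G.edgeSet →₀ ℕ) → (V →₀ ℕ) :=
      fun U => Multiset.toFinsupp (DM (Subtype.val) (Finsupp.toMultiset U)) with hDex
    have haev : ∀ U : G.edgeSet →₀ ℕ,
        aeval (fun e : G.edgeSet => edgeMon K (e : Sym2 V)) (monomial U (1:K))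
          = monomial (Dex U) 1 := by
      intro U
      have h1 := aeval_XM K (Subtype.val : G.edgeSet → Sym2 V) (Finsupp.toMultiset U)
      rwa [XM, Finsupp.toMultiset_toFinsupp] at h1
    have hker : (aeval fun e : G.edgeSet => edgeMon K (e : Sym2 V)) fp = 0 := hfp
    have hsum : (∑ U ∈ fp.support, if Dex U = Dex U₀ then coeff U fp else 0) = 0 := by
      have h1 : (aeval fun e : G.edgeSet => edgeMon K (e : Sym2 V)) fp
          = ∑ U ∈ fp.support, monomial (Dex U) (coeff U fp) := by
        conv_lhs => rw [fp.as_sum]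
        rw [map_sum]
        refine Finset.sum_congr rfl fun U _ => ?_
        rw [show (monomial U) (coeff U fp) = C (coeff U fp) * monomial U 1 by
          rw [C_mul_monomial, mul_one], map_mul, haev, aeval_C, algebraMap_eq,
          C_mul_monomial, mul_one]
      have h2 := congrArg (coeff (Dex U₀)) h1
      rw [hker, coeff_zero, coeff_sum] at h2
      simp only [coeff_monomial] at h2
      exact h2.symm
    have hex : ∃ U₁ ∈ fp.support, U₁ ≠ U₀ ∧ Dex U₁ = Dex U₀ := by
      by_contra hcon
      push_neg at hcon
      have heq : (∑ U ∈ fp.support, if Dex U = Dex U₀ then coeff U fp else 0) = c₀ := by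
        rw [Finset.sum_eq_single U₀]
        · simp [hc₀def]
        · intro U hU hUne
          rcases eq_or_ne (Dex U) (Dex U₀) with h | h
          · exact absurd h (hcon U hU hUne)
          · simp [h]
        · intro h; exact absurd hU₀ h
      rw [hsum] at heq
      exact hc₀ heq.symm
    obtain ⟨U₁, hU₁s, hU₁ne, hU₁D⟩ := hex
    set g : MvPolynomial G.edgeSet K := monomial U₀ 1 - monomial U₁ 1 with hg
    have hgS : g ∈ S := by
      refine ⟨Finsupp.toMultiset U₀, Finsupp.toMultiset U₁, ?_, ?_⟩
      · have h3 := congrArg Finsupp.toMultiset hU₁D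
        rw [Multiset.toFinsupp_toMultiset, Multiset.toFinsupp_toMultiset] at h3
        exact h3.symm
      · rw [hg, XM, XM, Finsupp.toMultiset_toFinsupp, Finsupp.toMultiset_toFinsupp]
    have hgker : g ∈ toricIdeal K G := by
      show (aeval fun e : G.edgeSet => edgeMon K (e : Sym2 V)) g = 0
      rw [hg, map_sub, haev, haev, hU₁D, sub_self]
    set fp' := fp - c₀ • g with hfp'
    have hfp'ker : fp' ∈ toricIdeal K G := by
      refine Submodule.sub_mem _ hfp ?_
      rw [MvPolynomial.smul_eq_C_mul]
      exact Ideal.mul_mem_left _ _ hgker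
    have hcoeff : ∀ U, coeff U fp' = coeff U fp
        - c₀ * ((if U₀ = U then (1:K) else 0) - if U₁ = U then 1 else 0) := by
      intro U
      rw [hfp', hg]
      simp [coeff_sub, coeff_smul, coeff_monomial, smul_eq_mul]
    have hsupp : fp'.support ⊆ fp.support.erase U₀ := by
      intro U hU
      rw [MvPolynomial.mem_support_iff] at hU
      rcases eq_or_ne U U₀ with rfl | hne2
      · exfalso
        apply hU
        rw [hcoeff, if_pos rfl, if_neg hU₁ne, hc₀def]
        ring
      · refine Finset.mem_erase.2 ⟨hne2, ?_⟩
        rcases eq_or_ne U U₁ with rfl | hne1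
        · exact hU₁s
        · rw [MvPolynomial.mem_support_iff]
          intro hz
          apply hU
          rw [hcoeff, if_neg (fun h => hne2 h.symm), if_neg (fun h => hne1 h.symm), hz]
          ring
    have hcard : fp'.support.card ≤ m := by
      have h4 := Finset.card_le_card hsupp
      rw [Finset.card_erase_of_mem hU₀] at h4
      have h5 : 1 ≤ fp.support.card := Finset.card_pos.2 ⟨U₀, hU₀⟩
      omega
    have hspan' := ih fp' hfp'ker hcard
    have hfpeq : fp = fp' + c₀ • g := by rw [hfp']; ring
    rw [hfpeq]
    exact Submodule.add_mem _ hspan'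
      (Submodule.smul_mem _ _ (Submodule.subset_span hgS))

lemma binomial_mem_extIdeal {G H : SimpleGraph V} (hle : H ≤ G)
    (M N : Multiset G.edgeSet)
    (hD : DM Subtype.val M = DM Subtype.val N)
    (hM : ∀ e ∈ M, (e : Sym2 V) ∈ H.edgeSet) (hN : ∀ e ∈ N, (e : Sym2 V) ∈ H.edgeSet) :
    XM K M - XM K N ∈ extIdeal K G H hle := by
  classical
  set ι : H.edgeSet → G.edgeSet := Set.inclusion (SimpleGraph.edgeSet_mono hle) with hι
  have lift : ∀ (A : Multiset G.edgeSet), (∀ e ∈ A, (e : Sym2 V) ∈ H.edgeSet) →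
      ∃ A₀ : Multiset H.edgeSet, A₀.map ι = A ∧
        A₀.map (Subtype.val) = A.map (Subtype.val) := by
    intro A hA
    refine ⟨A.attach.map (fun x => (⟨(x.1 : Sym2 V), hA x.1 x.2⟩ : H.edgeSet)), ?_, ?_⟩
    · rw [Multiset.map_map]
      have h1 : ∀ x ∈ A.attach,
          (ι ∘ fun x : {x // x ∈ A} => (⟨(x.1 : Sym2 V), hA x.1 x.2⟩ : H.edgeSet)) x
            = x.1 := fun x _ => Subtype.ext rfl
      rw [Multiset.map_congr rfl h1, Multiset.attach_map_val]
    · rw [Multiset.map_map]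
      have h1 : ∀ x ∈ A.attach,
          ((Subtype.val) ∘ fun x : {x // x ∈ A} =>
            (⟨(x.1 : Sym2 V), hA x.1 x.2⟩ : H.edgeSet)) x = (Subtype.val ∘ Subtype.val) x :=
        fun x _ => rfl
      rw [Multiset.map_congr rfl h1, ← Multiset.map_map, Multiset.attach_map_val]
  obtain ⟨M₀, hM₀, hM₀v⟩ := lift M hM
  obtain ⟨N₀, hN₀, hN₀v⟩ := lift N hN
  have hker : XM K M₀ - XM K N₀ ∈ toricIdeal K H := by
    show (aeval fun e : H.edgeSet => edgeMon K (e : Sym2 V)) (XM K M₀ - XM K N₀) = 0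
    rw [map_sub, aeval_XM, aeval_XM]
    have hDeq : DM (Subtype.val) M₀ = DM (Subtype.val) N₀ := by
      unfold DM
      rw [hM₀v, hN₀v]
      exact hD
    rw [hDeq, sub_self]
  have h2 := Ideal.mem_map_of_mem
    (rename ι : MvPolynomial H.edgeSet K →ₐ[K] MvPolynomial G.edgeSet K) hker
  rw [map_sub, rename_XM, rename_XM, hM₀, hN₀] at h2
  exact h2

lemma extIdeal_le_toric {G H : SimpleGraph V} (hle : H ≤ G) :
    extIdeal K G H hle ≤ toricIdeal K G := by
  rw [extIdeal, Ideal.map_le_iff_le_comap]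
  intro f hf
  rw [Ideal.mem_comap]
  show (aeval fun e : G.edgeSet => edgeMon K (e : Sym2 V))
    ((rename (Set.inclusion (SimpleGraph.edgeSet_mono hle))) f) = 0
  rw [aeval_rename]
  exact hf

lemma extIdeal_ne {G : SimpleGraph V} (F : Set (Sym2 V)) (a' : Sym2 V) (ha' : a' ∈ F)
    (Q : MvPolynomial G.edgeSet K) (hQ : Q ∈ toricIdeal K G)
    (hψ : (aeval (fun e : G.edgeSet =>
      if (e : Sym2 V) = a' then 0 else edgeMon K (e : Sym2 V))) Q ≠ 0) :
    extIdeal K G (G.deleteEdges F) (SimpleGraph.deleteEdges_le F) ≠ toricIdeal K G := by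
  intro heq
  have hm : Q ∈ extIdeal K G (G.deleteEdges F) (SimpleGraph.deleteEdges_le F) :=
    heq ▸ hQ
  apply hψ
  suffices hle2 : extIdeal K G (G.deleteEdges F) (SimpleGraph.deleteEdges_le F) ≤
      RingHom.ker ((aeval (fun e : G.edgeSet =>
        if (e : Sym2 V) = a' then 0 else edgeMon K (e : Sym2 V))) :
          MvPolynomial G.edgeSet K →ₐ[K] MvPolynomial V K) by
    exact hle2 hm
  rw [extIdeal, Ideal.map_le_iff_le_comap]
  intro f hf
  rw [Ideal.mem_comap]
  show (aeval fun e : G.edgeSet =>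
      if (e : Sym2 V) = a' then 0 else edgeMon K (e : Sym2 V))
    ((rename (Set.inclusion (SimpleGraph.edgeSet_mono
      (SimpleGraph.deleteEdges_le F)))) f) = 0
  rw [aeval_rename]
  have hre : ((fun e : G.edgeSet => if (e : Sym2 V) = a' then 0 else edgeMon K (e : Sym2 V))
      ∘ Set.inclusion (SimpleGraph.edgeSet_mono (SimpleGraph.deleteEdges_le F)))
      = fun e : (G.deleteEdges F).edgeSet => edgeMon K (e : Sym2 V) := by
    funext e
    have he : (e : Sym2 V) ∉ F :=
      ((SimpleGraph.edgeSet_deleteEdges F).subset e.2).2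
    simp only [Function.comp]
    rw [if_neg (fun h => he (by rw [h]; exact ha'))]
  rw [hre]
  exact hf

end TS

namespace TS

section Comb

variable {V : Type} [DecidableEq V]

def mkE (u v : V) (h : u ≠ v) : (⊤ : SimpleGraph V).edgeSet :=
  ⟨s(u, v), by rw [SimpleGraph.mem_edgeSet, SimpleGraph.top_adj]; exact h⟩

lemma mkE_coe (u v : V) (h : u ≠ v) :
    ((mkE u v h : (⊤ : SimpleGraph V).edgeSet) : Sym2 V) = s(u, v) := rfl

lemma sym2_ne_left {a b c d : V} (h1 : a ≠ c) (h2 : a ≠ d) : s(a, b) ≠ s(c, d) := by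
  intro h
  have ha : a ∈ s(c, d) := h ▸ Sym2.mem_mk_left a b
  rw [Sym2.mem_iff] at ha
  rcases ha with h' | h'
  · exact h1 h'
  · exact h2 h'

lemma sym2_ne_right {a b c d : V} (h1 : b ≠ c) (h2 : b ≠ d) : s(a, b) ≠ s(c, d) := by
  intro h
  have hb : b ∈ s(c, d) := h ▸ Sym2.mem_mk_right a b
  rw [Sym2.mem_iff] at hb
  rcases hb with h' | h'
  · exact h1 h'
  · exact h2 h'

lemma pair_disj {u v x y z : V} (hux : u ≠ x) (huy : u ≠ y) (hvx : v ≠ x) (hvy : v ≠ y)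
    (h1 : z ∈ s(u, v)) (h2 : z ∈ s(x, y)) : False := by
  rw [Sym2.mem_iff] at h1 h2
  rcases h1 with rfl | rfl <;> rcases h2 with h | h <;> simp_all

variable (p q r t : V)
variable (hpq : p ≠ q) (hpr : p ≠ r) (hpt : p ≠ t) (hqr : q ≠ r) (hqt : q ≠ t) (hrt : r ≠ t)

lemma F_meet {g1 g2 : Sym2 V} (h1 : g1 = s(p, q) ∨ g1 = s(r, t))
    (h2 : g2 = s(q, r) ∨ g2 = s(t, p)) : ∃ z, z ∈ g1 ∧ z ∈ g2 := by
  rcases h1 with rfl | rfl <;> rcases h2 with rfl | rfl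
  · exact ⟨q, by simp, by simp⟩
  · exact ⟨p, by simp, by simp⟩
  · exact ⟨r, by simp, by simp⟩
  · exact ⟨t, by simp, by simp⟩

include hpr hpt hqr hqt in
lemma F1_disj {g1 g2 : Sym2 V} (h1 : g1 = s(p, q) ∨ g1 = s(r, t))
    (h2 : g2 = s(p, q) ∨ g2 = s(r, t)) (hne : g1 ≠ g2)
    {z : V} (hz1 : z ∈ g1) (hz2 : z ∈ g2) : False := by
  rcases h1 with rfl | rfl <;> rcases h2 with rfl | rfl
  · exact hne rfl
  · rw [Sym2.mem_iff] at hz1 hz2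
    rcases hz1 with rfl | rfl <;> rcases hz2 with h | h <;> simp_all
  · rw [Sym2.mem_iff] at hz1 hz2
    rcases hz1 with rfl | rfl <;> rcases hz2 with h | h <;> simp_all
  · exact hne rfl

include hpq hpr hqt hrt in
lemma F2_disj {g1 g2 : Sym2 V} (h1 : g1 = s(q, r) ∨ g1 = s(t, p))
    (h2 : g2 = s(q, r) ∨ g2 = s(t, p)) (hne : g1 ≠ g2)
    {z : V} (hz1 : z ∈ g1) (hz2 : z ∈ g2) : False := by
  rcases h1 with rfl | rfl <;> rcases h2 with rfl | rfl
  · exact hne rfl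
  · rw [Sym2.mem_iff] at hz1 hz2
    rcases hz1 with rfl | rfl <;> rcases hz2 with h | h <;> simp_all
  · rw [Sym2.mem_iff] at hz1 hz2
    rcases hz1 with rfl | rfl <;> rcases hz2 with h | h <;> simp_all
  · exact hne rfl

include hpq hpr hpt hqr hqt hrt in
lemma F1F2_ne {g : Sym2 V} (h1 : g = s(p, q) ∨ g = s(r, t))
    (h2 : g = s(q, r) ∨ g = s(t, p)) : False := by
  rcases h1 with rfl | rfl <;> rcases h2 with h | h <;>
    rw [Sym2.eq_iff] at h <;>
    rcases h with ⟨h', h''⟩ | ⟨h', h''⟩ <;> simp_all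

include hpq hpr hpt hqr hqt hrt in
lemma matching_no_both {α β γ δ : V}
    (hαγ : α ≠ γ) (hαδ : α ≠ δ) (hβγ : β ≠ γ) (hβδ : β ≠ δ)
    {g1 g2 : Sym2 V} (h1 : g1 = s(α, β) ∨ g1 = s(γ, δ)) (h2 : g2 = s(α, β) ∨ g2 = s(γ, δ))
    (hF1 : g1 = s(p, q) ∨ g1 = s(r, t)) (hF2 : g2 = s(q, r) ∨ g2 = s(t, p)) : False := by
  obtain ⟨z, hz1, hz2⟩ := F_meet p q r t hF1 hF2
  rcases h1 with rfl | rfl <;> rcases h2 with h | h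
  · exact F1F2_ne p q r t hpq hpr hpt hqr hqt hrt hF1 (h ▸ hF2)
  · exact pair_disj hαγ hαδ hβγ hβδ hz1 (h ▸ hz2)
  · exact pair_disj hαγ hαδ hβγ hβδ (h ▸ hz2) hz1
  · exact F1F2_ne p q r t hpq hpr hpt hqr hqt hrt hF1 (h ▸ hF2)

end Comb

section Rel

variable (K : Type) [Field K] {V : Type} [DecidableEq V]
variable (J : Ideal (MvPolynomial (⊤ : SimpleGraph V).edgeSet K))

abbrev Rel (M N : Multiset (⊤ : SimpleGraph V).edgeSet) : Prop := XM K M - XM K N ∈ J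

lemma rel_refl (M : Multiset (⊤ : SimpleGraph V).edgeSet) : Rel K J M M := by
  unfold Rel; rw [sub_self]; exact Submodule.zero_mem _

lemma rel_symm {M N : Multiset (⊤ : SimpleGraph V).edgeSet} (h : Rel K J M N) :
    Rel K J N M := by
  unfold Rel at *
  have h2 := Submodule.neg_mem _ h
  rwa [neg_sub] at h2

lemma rel_trans {M N P : Multiset (⊤ : SimpleGraph V).edgeSet}
    (h1 : Rel K J M N) (h2 : Rel K J N P) : Rel K J M P := by
  unfold Rel at *
  have h3 := Submodule.add_mem _ h1 h2
  rwa [sub_add_sub_cancel] at h3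

lemma rel_add_left (W : Multiset (⊤ : SimpleGraph V).edgeSet)
    {M N : Multiset (⊤ : SimpleGraph V).edgeSet} (h : Rel K J M N) :
    Rel K J (W + M) (W + N) := by
  unfold Rel at *
  rw [XM_add, XM_add, ← mul_sub]
  exact Ideal.mul_mem_left _ _ h

lemma DM_pair (u v x y : V) (h1 : u ≠ v) (h2 : x ≠ y) :
    DM Subtype.val ({mkE u v h1, mkE x y h2} :
      Multiset (⊤ : SimpleGraph V).edgeSet) = {u, v, x, y} := by
  show DM Subtype.val (mkE u v h1 ::ₘ {mkE x y h2}) = _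
  rw [DM_cons, DM_singleton, mkE_coe, mkE_coe, e2m_mk, e2m_mk]
  rfl

lemma quad_swap_23 (a b c d : V) : ({a, b, c, d} : Multiset V) = {a, c, b, d} :=
  congrArg (a ::ₘ ·) (Multiset.cons_swap b c {d})

lemma quad_swap_34 (a b c d : V) : ({a, b, c, d} : Multiset V) = {a, b, d, c} :=
  congrArg (fun s => a ::ₘ b ::ₘ s) (Multiset.cons_swap c d 0)

lemma pair_mem {A B e : (⊤ : SimpleGraph V).edgeSet}
    (h : e ∈ ({A, B} : Multiset (⊤ : SimpleGraph V).edgeSet)) : e = A ∨ e = B := by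
  rcases Multiset.mem_cons.1 h with h' | h'
  · exact Or.inl h'
  · exact Or.inr (Multiset.mem_singleton.1 h')

variable (p q r t : V)
variable (hpq : p ≠ q) (hpr : p ≠ r) (hpt : p ≠ t) (hqr : q ≠ r) (hqt : q ≠ t) (hrt : r ≠ t)
variable (hJ1 : ∀ M N : Multiset (⊤ : SimpleGraph V).edgeSet,
    DM Subtype.val M = DM Subtype.val N →
    (∀ e ∈ M, (e : Sym2 V) ≠ s(p, q) ∧ (e : Sym2 V) ≠ s(r, t)) →
    (∀ e ∈ N, (e : Sym2 V) ≠ s(p, q) ∧ (e : Sym2 V) ≠ s(r, t)) →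
    XM K M - XM K N ∈ J)
variable (hJ2 : ∀ M N : Multiset (⊤ : SimpleGraph V).edgeSet,
    DM Subtype.val M = DM Subtype.val N →
    (∀ e ∈ M, (e : Sym2 V) ≠ s(q, r) ∧ (e : Sym2 V) ≠ s(t, p)) →
    (∀ e ∈ N, (e : Sym2 V) ≠ s(q, r) ∧ (e : Sym2 V) ≠ s(t, p)) →
    XM K M - XM K N ∈ J)

include hpq hpr hpt hqr hqt hrt hJ1 hJ2 in
lemma rel_swap_bad (u v x y : V)
    (huv : u ≠ v) (hux : u ≠ x) (huy : u ≠ y) (hvx : v ≠ x) (hvy : v ≠ y) (hxy : x ≠ y)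
    {g1 : Sym2 V} (hg1M : g1 = s(u, v) ∨ g1 = s(x, y)) (hg1F : g1 = s(p, q) ∨ g1 = s(r, t))
    {g2 : Sym2 V} (hg2M : g2 = s(u, x) ∨ g2 = s(v, y)) (hg2F : g2 = s(q, r) ∨ g2 = s(t, p)) :
    Rel K J {mkE u v huv, mkE x y hxy} {mkE u x hux, mkE v y hvy} := by
  have h13 : Rel K J {mkE u v huv, mkE x y hxy} {mkE u y huy, mkE v x hvx} := by
    apply hJ2
    · rw [DM_pair, DM_pair]
      calc ({u, v, x, y} : Multiset V) = {u, v, y, x} := quad_swap_34 u v x y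
        _ = {u, y, v, x} := quad_swap_23 u v y x
    · intro e he
      constructor <;> intro hcon
      · rcases pair_mem he with rfl | rfl
        · exact matching_no_both p q r t hpq hpr hpt hqr hqt hrt hux huy hvx hvy
            hg1M (Or.inl rfl) hg1F (Or.inl hcon)
        · exact matching_no_both p q r t hpq hpr hpt hqr hqt hrt hux huy hvx hvy
            hg1M (Or.inr rfl) hg1F (Or.inl hcon)
      · rcases pair_mem he with rfl | rfl
        · exact matching_no_both p q r t hpq hpr hpt hqr hqt hrt hux huy hvx hvy
            hg1M (Or.inl rfl) hg1F (Or.inr hcon)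
        · exact matching_no_both p q r t hpq hpr hpt hqr hqt hrt hux huy hvx hvy
            hg1M (Or.inr rfl) hg1F (Or.inr hcon)
    · intro e he
      constructor <;> intro hcon
      · rcases pair_mem he with rfl | rfl
        · rcases hg2M with rfl | rfl
          · exact F2_disj p q r t hpq hpr hqt hrt (Or.inl hcon) hg2F
              (sym2_ne_right (Ne.symm huy) (Ne.symm hxy))
              (Sym2.mem_mk_left u y) (Sym2.mem_mk_left u x)
          · exact F2_disj p q r t hpq hpr hqt hrt (Or.inl hcon) hg2F
              (sym2_ne_left huv huy)
              (Sym2.mem_mk_right u y) (Sym2.mem_mk_right v y)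
        · rcases hg2M with rfl | rfl
          · exact F2_disj p q r t hpq hpr hqt hrt (Or.inl hcon) hg2F
              (sym2_ne_left (Ne.symm huv) hvx)
              (Sym2.mem_mk_right v x) (Sym2.mem_mk_right u x)
          · exact F2_disj p q r t hpq hpr hqt hrt (Or.inl hcon) hg2F
              (sym2_ne_right (Ne.symm hvx) hxy)
              (Sym2.mem_mk_left v x) (Sym2.mem_mk_left v y)
      · rcases pair_mem he with rfl | rfl
        · rcases hg2M with rfl | rfl
          · exact F2_disj p q r t hpq hpr hqt hrt (Or.inr hcon) hg2F
              (sym2_ne_right (Ne.symm huy) (Ne.symm hxy))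
              (Sym2.mem_mk_left u y) (Sym2.mem_mk_left u x)
          · exact F2_disj p q r t hpq hpr hqt hrt (Or.inr hcon) hg2F
              (sym2_ne_left huv huy)
              (Sym2.mem_mk_right u y) (Sym2.mem_mk_right v y)
        · rcases hg2M with rfl | rfl
          · exact F2_disj p q r t hpq hpr hqt hrt (Or.inr hcon) hg2F
              (sym2_ne_left (Ne.symm huv) hvx)
              (Sym2.mem_mk_right v x) (Sym2.mem_mk_right u x)
          · exact F2_disj p q r t hpq hpr hqt hrt (Or.inr hcon) hg2F
              (sym2_ne_right (Ne.symm hvx) hxy)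
              (Sym2.mem_mk_left v x) (Sym2.mem_mk_left v y)
  have h32 : Rel K J {mkE u y huy, mkE v x hvx} {mkE u x hux, mkE v y hvy} := by
    apply hJ1
    · rw [DM_pair, DM_pair]
      calc ({u, y, v, x} : Multiset V) = {u, v, y, x} := quad_swap_23 u y v x
        _ = {u, v, x, y} := quad_swap_34 u v y x
        _ = {u, x, v, y} := quad_swap_23 u v x y
    · intro e he
      constructor <;> intro hcon
      · rcases pair_mem he with rfl | rfl
        · rcases hg1M with rfl | rfl
          · exact F1_disj p q r t hpr hpt hqr hqt (Or.inl hcon) hg1F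
              (sym2_ne_right (Ne.symm huy) (Ne.symm hvy))
              (Sym2.mem_mk_left u y) (Sym2.mem_mk_left u v)
          · exact F1_disj p q r t hpr hpt hqr hqt (Or.inl hcon) hg1F
              (sym2_ne_left hux huy)
              (Sym2.mem_mk_right u y) (Sym2.mem_mk_right x y)
        · rcases hg1M with rfl | rfl
          · exact F1_disj p q r t hpr hpt hqr hqt (Or.inl hcon) hg1F
              (sym2_ne_right (Ne.symm hux) (Ne.symm hvx))
              (Sym2.mem_mk_left v x) (Sym2.mem_mk_right u v)
          · exact F1_disj p q r t hpr hpt hqr hqt (Or.inl hcon) hg1F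
              (sym2_ne_left hvx hvy)
              (Sym2.mem_mk_right v x) (Sym2.mem_mk_left x y)
      · rcases pair_mem he with rfl | rfl
        · rcases hg1M with rfl | rfl
          · exact F1_disj p q r t hpr hpt hqr hqt (Or.inr hcon) hg1F
              (sym2_ne_right (Ne.symm huy) (Ne.symm hvy))
              (Sym2.mem_mk_left u y) (Sym2.mem_mk_left u v)
          · exact F1_disj p q r t hpr hpt hqr hqt (Or.inr hcon) hg1F
              (sym2_ne_left hux huy)
              (Sym2.mem_mk_right u y) (Sym2.mem_mk_right x y)
        · rcases hg1M with rfl | rfl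
          · exact F1_disj p q r t hpr hpt hqr hqt (Or.inr hcon) hg1F
              (sym2_ne_right (Ne.symm hux) (Ne.symm hvx))
              (Sym2.mem_mk_left v x) (Sym2.mem_mk_right u v)
          · exact F1_disj p q r t hpr hpt hqr hqt (Or.inr hcon) hg1F
              (sym2_ne_left hvx hvy)
              (Sym2.mem_mk_right v x) (Sym2.mem_mk_left x y)
    · intro e he
      constructor <;> intro hcon
      · rcases pair_mem he with rfl | rfl
        · exact matching_no_both p q r t hpq hpr hpt hqr hqt hrt huv huy (Ne.symm hvx) hxy
            (Or.inl rfl) hg2M (Or.inl hcon) hg2F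
        · exact matching_no_both p q r t hpq hpr hpt hqr hqt hrt huv huy (Ne.symm hvx) hxy
            (Or.inr rfl) hg2M (Or.inl hcon) hg2F
      · rcases pair_mem he with rfl | rfl
        · exact matching_no_both p q r t hpq hpr hpt hqr hqt hrt huv huy (Ne.symm hvx) hxy
            (Or.inl rfl) hg2M (Or.inr hcon) hg2F
        · exact matching_no_both p q r t hpq hpr hpt hqr hqt hrt huv huy (Ne.symm hvx) hxy
            (Or.inr rfl) hg2M (Or.inr hcon) hg2F
  exact rel_trans K J h13 h32

include hpq hpr hpt hqr hqt hrt hJ1 hJ2 in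
lemma rel_swap (u v x y : V)
    (huv : u ≠ v) (hux : u ≠ x) (huy : u ≠ y) (hvx : v ≠ x) (hvy : v ≠ y) (hxy : x ≠ y) :
    Rel K J {mkE u v huv, mkE x y hxy} {mkE u x hux, mkE v y hvy} := by
  rcases Classical.em (∀ g : Sym2 V,
      (g = s(u, v) ∨ g = s(x, y) ∨ g = s(u, x) ∨ g = s(v, y)) →
        g ≠ s(p, q) ∧ g ≠ s(r, t)) with hA | hA
  case inl =>
    apply hJ1
    · rw [DM_pair, DM_pair]
      exact quad_swap_23 u v x y
    · intro e he
      rcases pair_mem he with rfl | rfl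
      · exact hA _ (Or.inl rfl)
      · exact hA _ (Or.inr (Or.inl rfl))
    · intro e he
      rcases pair_mem he with rfl | rfl
      · exact hA _ (Or.inr (Or.inr (Or.inl rfl)))
      · exact hA _ (Or.inr (Or.inr (Or.inr rfl)))
  rcases Classical.em (∀ g : Sym2 V,
      (g = s(u, v) ∨ g = s(x, y) ∨ g = s(u, x) ∨ g = s(v, y)) →
        g ≠ s(q, r) ∧ g ≠ s(t, p)) with hB | hB
  case inl =>
    apply hJ2
    · rw [DM_pair, DM_pair]
      exact quad_swap_23 u v x y
    · intro e he
      rcases pair_mem he with rfl | rfl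
      · exact hB _ (Or.inl rfl)
      · exact hB _ (Or.inr (Or.inl rfl))
    · intro e he
      rcases pair_mem he with rfl | rfl
      · exact hB _ (Or.inr (Or.inr (Or.inl rfl)))
      · exact hB _ (Or.inr (Or.inr (Or.inr rfl)))
  push_neg at hA hB
  obtain ⟨g1, hg1M4, hg1F⟩ := hA
  obtain ⟨g2, hg2M4, hg2F⟩ := hB
  have hg1F' : g1 = s(p, q) ∨ g1 = s(r, t) := by
    by_cases h' : g1 = s(p, q)
    · exact Or.inl h'
    · exact Or.inr (hg1F h')
  have hg2F' : g2 = s(q, r) ∨ g2 = s(t, p) := by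
    by_cases h' : g2 = s(q, r)
    · exact Or.inl h'
    · exact Or.inr (hg2F h')
  have hg1side : (g1 = s(u, v) ∨ g1 = s(x, y)) ∨ (g1 = s(u, x) ∨ g1 = s(v, y)) := by
    rcases hg1M4 with h | h | h | h
    · exact Or.inl (Or.inl h)
    · exact Or.inl (Or.inr h)
    · exact Or.inr (Or.inl h)
    · exact Or.inr (Or.inr h)
  have hg2side : (g2 = s(u, v) ∨ g2 = s(x, y)) ∨ (g2 = s(u, x) ∨ g2 = s(v, y)) := by
    rcases hg2M4 with h | h | h | h
    · exact Or.inl (Or.inl h)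
    · exact Or.inl (Or.inr h)
    · exact Or.inr (Or.inl h)
    · exact Or.inr (Or.inr h)
  rcases hg1side with h1 | h1 <;> rcases hg2side with h2 | h2
  · exact (matching_no_both p q r t hpq hpr hpt hqr hqt hrt
      hux huy hvx hvy h1 h2 hg1F' hg2F').elim
  · exact rel_swap_bad K J p q r t hpq hpr hpt hqr hqt hrt hJ1 hJ2 u v x y
      huv hux huy hvx hvy hxy h1 hg1F' h2 hg2F'
  · apply rel_symm
    exact rel_swap_bad K J p q r t hpq hpr hpt hqr hqt hrt hJ1 hJ2 u x v y
      hux huv huy (Ne.symm hvx) hxy hvy h1 hg1F' h2 hg2F'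
  · exact (matching_no_both p q r t hpq hpr hpt hqr hqt hrt
      huv huy (Ne.symm hvx) hxy h1 h2 hg1F' hg2F').elim

end Rel

end TS

namespace TS

section Induct

variable (K : Type) [Field K] {V : Type} [DecidableEq V]
variable (J : Ideal (MvPolynomial (⊤ : SimpleGraph V).edgeSet K))

lemma mem_DM {A : Multiset (⊤ : SimpleGraph V).edgeSet}
    {e : (⊤ : SimpleGraph V).edgeSet} (he : e ∈ A) {u : V}
    (hu : u ∈ e2m (e : Sym2 V)) : u ∈ DM Subtype.val A :=
  Multiset.mem_bind.2 ⟨(e : Sym2 V), Multiset.mem_map_of_mem _ he, hu⟩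

lemma exists_edge_at {A : Multiset (⊤ : SimpleGraph V).edgeSet} {u : V}
    (h : u ∈ DM Subtype.val A) :
    ∃ (e : (⊤ : SimpleGraph V).edgeSet) (v : V),
      e ∈ A ∧ (e : Sym2 V) = s(u, v) ∧ u ≠ v := by
  rw [DM, Multiset.mem_bind] at h
  obtain ⟨g, hg, hu⟩ := h
  rw [Multiset.mem_map] at hg
  obtain ⟨e, heA, rfl⟩ := hg
  obtain ⟨v, hv⟩ := mem_e2m hu
  refine ⟨e, v, heA, hv, ?_⟩
  have h2 := e.2
  rw [hv, SimpleGraph.mem_edgeSet, SimpleGraph.top_adj] at h2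
  exact h2

lemma rel_cancel {k : ℕ}
    (ih : ∀ M N : Multiset (⊤ : SimpleGraph V).edgeSet,
      M.card = k → DM Subtype.val M = DM Subtype.val N → Rel K J M N)
    {M N : Multiset (⊤ : SimpleGraph V).edgeSet}
    (hc : M.card = k + 1) (hD : DM Subtype.val M = DM Subtype.val N)
    {e : (⊤ : SimpleGraph V).edgeSet} (heM : e ∈ M) (heN : e ∈ N) : Rel K J M N := by
  have hM := (Multiset.cons_erase heM).symm
  have hN := (Multiset.cons_erase heN).symm
  have hD' : DM Subtype.val (M.erase e) = DM Subtype.val (N.erase e) := by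
    have h1 : e2m (e : Sym2 V) + DM Subtype.val (M.erase e)
        = e2m (e : Sym2 V) + DM Subtype.val (N.erase e) := by
      rw [← DM_cons, ← DM_cons, ← hM, ← hN]
      exact hD
    exact add_left_cancel h1
  have hcM : (M.erase e).card = k := by
    have h1 := congrArg Multiset.card hM
    rw [Multiset.card_cons] at h1
    omega
  have h2 := rel_add_left K J {e} (ih _ _ hcM hD')
  rw [Multiset.singleton_add, Multiset.singleton_add, ← hM, ← hN] at h2
  exact h2

lemma rel_step {k : ℕ}
    (ih : ∀ M N : Multiset (⊤ : SimpleGraph V).edgeSet,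
      M.card = k → DM Subtype.val M = DM Subtype.val N → Rel K J M N)
    {M N : Multiset (⊤ : SimpleGraph V).edgeSet}
    (hc : M.card = k + 1) (hD : DM Subtype.val M = DM Subtype.val N)
    {g h e₁ e₂ : (⊤ : SimpleGraph V).edgeSet}
    (hg : g ∈ M) (hh : h ∈ M.erase g) (he₁ : e₁ ∈ N)
    (hsw : Rel K J {g, h} {e₁, e₂})
    (hDsw : DM Subtype.val ({g, h} : Multiset (⊤ : SimpleGraph V).edgeSet)
      = DM Subtype.val ({e₁, e₂} : Multiset (⊤ : SimpleGraph V).edgeSet)) :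
    Rel K J M N := by
  set W := (M.erase g).erase h with hW
  have hpair : ∀ (A B : (⊤ : SimpleGraph V).edgeSet)
      (W' : Multiset (⊤ : SimpleGraph V).edgeSet),
      ({A, B} : Multiset (⊤ : SimpleGraph V).edgeSet) + W' = A ::ₘ B ::ₘ W' := by
    intro A B W'
    rw [Multiset.insert_eq_cons, Multiset.cons_add, Multiset.singleton_add]
  have hM : M = ({g, h} : Multiset (⊤ : SimpleGraph V).edgeSet) + W := by
    rw [hpair, hW, Multiset.cons_erase hh, Multiset.cons_erase hg]
  have h1 : Rel K J M (({e₁, e₂} : Multiset (⊤ : SimpleGraph V).edgeSet) + W) := by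
    have h2 := rel_add_left K J W hsw
    rw [add_comm W _, add_comm W _] at h2
    rw [hM]
    exact h2
  have hD2 : DM Subtype.val (({e₁, e₂} : Multiset (⊤ : SimpleGraph V).edgeSet) + W)
      = DM Subtype.val N := by
    rw [DM_add, ← hDsw, ← DM_add, ← hM]
    exact hD
  have hc2 : (({e₁, e₂} : Multiset (⊤ : SimpleGraph V).edgeSet) + W).card = k + 1 := by
    have h3 := congrArg Multiset.card hM
    rw [Multiset.card_add] at h3
    rw [Multiset.card_add]
    simp only [Multiset.insert_eq_cons, Multiset.card_cons, Multiset.card_singleton] at h3 ⊢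
    omega
  refine rel_trans K J h1 (rel_cancel K J ih hc2 hD2 ?_ he₁)
  rw [hpair]
  exact Multiset.mem_cons_self _ _

variable (p q r t : V)
variable (hpq : p ≠ q) (hpr : p ≠ r) (hpt : p ≠ t) (hqr : q ≠ r) (hqt : q ≠ t) (hrt : r ≠ t)
variable (hJ1 : ∀ M N : Multiset (⊤ : SimpleGraph V).edgeSet,
    DM Subtype.val M = DM Subtype.val N →
    (∀ e ∈ M, (e : Sym2 V) ≠ s(p, q) ∧ (e : Sym2 V) ≠ s(r, t)) →
    (∀ e ∈ N, (e : Sym2 V) ≠ s(p, q) ∧ (e : Sym2 V) ≠ s(r, t)) →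
    XM K M - XM K N ∈ J)
variable (hJ2 : ∀ M N : Multiset (⊤ : SimpleGraph V).edgeSet,
    DM Subtype.val M = DM Subtype.val N →
    (∀ e ∈ M, (e : Sym2 V) ≠ s(q, r) ∧ (e : Sym2 V) ≠ s(t, p)) →
    (∀ e ∈ N, (e : Sym2 V) ≠ s(q, r) ∧ (e : Sym2 V) ≠ s(t, p)) →
    XM K M - XM K N ∈ J)

include hpq hpr hpt hqr hqt hrt hJ1 hJ2 in
lemma rel_of_DM_eq :
    ∀ (k : ℕ) (M N : Multiset (⊤ : SimpleGraph V).edgeSet),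
      M.card = k → DM Subtype.val M = DM Subtype.val N → Rel K J M N := by
  intro k
  induction k with
  | zero =>
    intro M N hc hD
    rw [Multiset.card_eq_zero] at hc
    subst hc
    have hN : N = 0 := by
      by_contra hN0
      obtain ⟨e, he⟩ := Multiset.exists_mem_of_ne_zero hN0
      obtain ⟨xx, yy, hxy⟩ := exists_mk (e : Sym2 V)
      have hmem : xx ∈ DM Subtype.val N :=
        mem_DM he (by rw [hxy]; exact left_mem_e2m xx yy)
      rw [← hD] at hmem
      simp [DM] at hmem
    rw [hN]
    exact rel_refl K J 0
  | succ k ih =>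
    intro M N hc hD
    by_cases hsh : ∃ e, e ∈ M ∧ e ∈ N
    · obtain ⟨e, heM, heN⟩ := hsh
      exact rel_cancel K J ih hc hD heM heN
    · push_neg at hsh
      have hM0 : M ≠ 0 := by
        intro h'
        rw [h'] at hc
        simp at hc
      obtain ⟨e₀, he₀⟩ := Multiset.exists_mem_of_ne_zero hM0
      obtain ⟨u, w₀, he₀v⟩ := exists_mk (e₀ : Sym2 V)
      have huDM : u ∈ DM Subtype.val M :=
        mem_DM he₀ (by rw [he₀v]; exact left_mem_e2m _ _)
      have huDN : u ∈ DM Subtype.val N := hD ▸ huDM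
      obtain ⟨e, v, heN, hev, huv⟩ := exists_edge_at huDN
      have heM : e ∉ M := fun h' => hsh e h' heN
      obtain ⟨g, x, hgM, hgv, hux⟩ := exists_edge_at huDM
      have hxv : x ≠ v := by
        intro h'
        apply heM
        rw [show e = g from Subtype.ext (by rw [hgv, hev, h'])]
        exact hgM
      have hvDN : v ∈ DM Subtype.val N :=
        mem_DM heN (by rw [hev]; exact right_mem_e2m _ _)
      have hvDM : v ∈ DM Subtype.val M := by rw [hD]; exact hvDN
      obtain ⟨h, y, hhM, hhv, hvy⟩ := exists_edge_at hvDM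
      have hyu : y ≠ u := by
        intro h'
        apply heM
        rw [show e = h from Subtype.ext (by rw [hhv, hev, h', Sym2.eq_swap])]
        exact hhM
      have hgh : g ≠ h := by
        intro h'
        have h2 : u ∈ s(v, y) := by rw [← hhv, ← h', hgv]; exact Sym2.mem_mk_left u x
        rw [Sym2.mem_iff] at h2
        rcases h2 with h2 | h2
        · exact huv h2
        · exact hyu h2.symm
      have hhM' : h ∈ M.erase g := (Multiset.mem_erase_of_ne (Ne.symm hgh)).2 hhM
      by_cases hxy : x = y
      · subst hxy
        have hxDM : x ∈ DM Subtype.val M :=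
          mem_DM hgM (by rw [hgv]; exact right_mem_e2m _ _)
        have hxDN : x ∈ DM Subtype.val N := hD ▸ hxDM
        obtain ⟨e₂, s', he₂N, he₂v, hxs⟩ := exists_edge_at hxDN
        have he₂M : e₂ ∉ M := fun h' => hsh e₂ h' he₂N
        have hsu : s' ≠ u := by
          intro h'
          apply he₂M
          rw [show e₂ = g from Subtype.ext (by rw [he₂v, hgv, h', Sym2.eq_swap])]
          exact hgM
        have hsv : s' ≠ v := by
          intro h'
          apply he₂M
          rw [show e₂ = h from Subtype.ext (by rw [he₂v, hhv, h', Sym2.eq_swap])]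
          exact hhM
        have hsDN : s' ∈ DM Subtype.val N :=
          mem_DM he₂N (by rw [he₂v]; exact right_mem_e2m _ _)
        have hsDM : s' ∈ DM Subtype.val M := by rw [hD]; exact hsDN
        obtain ⟨g₂, z, hg₂M, hg₂v, hsz⟩ := exists_edge_at hsDM
        have hzx : z ≠ x := by
          intro h'
          apply hsh g₂ hg₂M
          rw [show g₂ = e₂ from Subtype.ext (by rw [hg₂v, he₂v, h', Sym2.eq_swap])]
          exact he₂N
        by_cases hzu : z = u
        · rw [hzu] at hg₂v
          -- swap (x, v, s', u) on edges h = s(v,x), g₂ = s(s',u)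
          have hg₂h : g₂ ≠ h := by
            intro h'
            have h2 : v ∈ s(s', u) := by rw [← hg₂v, h', hhv]; exact Sym2.mem_mk_left v x
            rw [Sym2.mem_iff] at h2
            rcases h2 with h2 | h2
            · exact hsv h2.symm
            · exact huv h2.symm
          have hg₂M' : g₂ ∈ M.erase h := (Multiset.mem_erase_of_ne hg₂h).2 hg₂M
          have hsw := rel_swap K J p q r t hpq hpr hpt hqr hqt hrt hJ1 hJ2
            x v s' u hxv hxs (Ne.symm hux) (Ne.symm hsv) (Ne.symm huv) hsu
          rw [show mkE x v hxv = h from Subtype.ext (by rw [hhv]; exact Sym2.eq_swap),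
            show mkE s' u hsu = g₂ from Subtype.ext hg₂v.symm,
            show mkE x s' hxs = e₂ from Subtype.ext he₂v.symm] at hsw
          refine rel_step K J ih hc hD hhM hg₂M' he₂N hsw ?_
          rw [show h = mkE x v hxv from Subtype.ext (by rw [hhv]; exact (Sym2.eq_swap).symm),
            show g₂ = mkE s' u hsu from Subtype.ext hg₂v,
            show e₂ = mkE x s' hxs from Subtype.ext he₂v]
          rw [DM_pair, DM_pair]
          exact quad_swap_23 x v s' u
        · -- z ≠ u: swap (x, u, s', z) on edges g = s(u,x), g₂ = s(s',z)
          have huz : u ≠ z := fun h' => hzu h'.symm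
          have hg₂g : g₂ ≠ g := by
            intro h'
            have h2 : u ∈ s(s', z) := by rw [← hg₂v, h', hgv]; exact Sym2.mem_mk_left u x
            rw [Sym2.mem_iff] at h2
            rcases h2 with h2 | h2
            · exact hsu h2.symm
            · exact huz h2
          have hg₂M' : g₂ ∈ M.erase g := (Multiset.mem_erase_of_ne hg₂g).2 hg₂M
          have hsw := rel_swap K J p q r t hpq hpr hpt hqr hqt hrt hJ1 hJ2
            x u s' z (Ne.symm hux) hxs (Ne.symm hzx) (Ne.symm hsu) huz hsz
          rw [show mkE x u (Ne.symm hux) = g from Subtype.ext (by rw [hgv]; exact Sym2.eq_swap),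
            show mkE s' z hsz = g₂ from Subtype.ext hg₂v.symm,
            show mkE x s' hxs = e₂ from Subtype.ext he₂v.symm] at hsw
          refine rel_step K J ih hc hD hgM hg₂M' he₂N hsw ?_
          rw [show g = mkE x u (Ne.symm hux) from Subtype.ext (by rw [hgv]; exact (Sym2.eq_swap).symm),
            show g₂ = mkE s' z hsz from Subtype.ext hg₂v,
            show e₂ = mkE x s' hxs from Subtype.ext he₂v]
          rw [DM_pair, DM_pair]
          exact quad_swap_23 x u s' z
      · -- x ≠ y: swap (u, x, v, y)
        have hsw := rel_swap K J p q r t hpq hpr hpt hqr hqt hrt hJ1 hJ2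
          u x v y hux huv (Ne.symm hyu) hxv hxy hvy
        rw [show mkE u x hux = g from Subtype.ext hgv.symm,
          show mkE v y hvy = h from Subtype.ext hhv.symm,
          show mkE u v huv = e from Subtype.ext hev.symm] at hsw
        refine rel_step K J ih hc hD hgM hhM' heN hsw ?_
        rw [show g = mkE u x hux from Subtype.ext hgv,
          show h = mkE v y hvy from Subtype.ext hhv,
          show e = mkE u v huv from Subtype.ext hev]
        rw [DM_pair, DM_pair]
        exact quad_swap_23 u x v y

end Induct

section Main

variable (K : Type) [Field K] {V : Type} [DecidableEq V]

lemma binomial_mem_ext_del (F : Set (Sym2 V))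
    (M N : Multiset (⊤ : SimpleGraph V).edgeSet)
    (hD : DM Subtype.val M = DM Subtype.val N)
    (hM : ∀ e ∈ M, (e : Sym2 V) ∉ F) (hN : ∀ e ∈ N, (e : Sym2 V) ∉ F) :
    XM K M - XM K N ∈ extIdeal K ⊤ ((⊤ : SimpleGraph V).deleteEdges F)
      (SimpleGraph.deleteEdges_le F) := by
  apply binomial_mem_extIdeal K (SimpleGraph.deleteEdges_le F) M N hD
  · intro e he
    rw [SimpleGraph.edgeSet_deleteEdges]
    exact ⟨e.2, hM e he⟩
  · intro e he
    rw [SimpleGraph.edgeSet_deleteEdges]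
    exact ⟨e.2, hN e he⟩

lemma splitting_general (p q r t : V)
    (hpq : p ≠ q) (hpr : p ≠ r) (hpt : p ≠ t) (hqr : q ≠ r) (hqt : q ≠ t) (hrt : r ≠ t)
    (F1 F2 : Set (Sym2 V))
    (hF1 : ∀ g ∈ F1, g = s(p, q) ∨ g = s(r, t))
    (hF2 : ∀ g ∈ F2, g = s(q, r) ∨ g = s(t, p))
    (haF1 : s(p, q) ∈ F1) (hbF2 : s(q, r) ∈ F2) :
    IsSubgraphSplitting K (⊤ : SimpleGraph V)
      ((⊤ : SimpleGraph V).deleteEdges F1) ((⊤ : SimpleGraph V).deleteEdges F2)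
      (SimpleGraph.deleteEdges_le _) (SimpleGraph.deleteEdges_le _) := by
  have htp : t ≠ p := Ne.symm hpt
  set J : Ideal (MvPolynomial (⊤ : SimpleGraph V).edgeSet K) :=
    extIdeal K ⊤ ((⊤ : SimpleGraph V).deleteEdges F1) (SimpleGraph.deleteEdges_le _)
      + extIdeal K ⊤ ((⊤ : SimpleGraph V).deleteEdges F2) (SimpleGraph.deleteEdges_le _)
    with hJdef
  have hJ1 : ∀ M N : Multiset (⊤ : SimpleGraph V).edgeSet,
      DM Subtype.val M = DM Subtype.val N →
      (∀ e ∈ M, (e : Sym2 V) ≠ s(p, q) ∧ (e : Sym2 V) ≠ s(r, t)) →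
      (∀ e ∈ N, (e : Sym2 V) ≠ s(p, q) ∧ (e : Sym2 V) ≠ s(r, t)) →
      XM K M - XM K N ∈ J := by
    intro M N hD hM hN
    rw [hJdef, Ideal.add_eq_sup]
    apply Submodule.mem_sup_left
    apply binomial_mem_ext_del K F1 M N hD
    · intro e he hmem
      rcases hF1 _ hmem with h' | h'
      · exact (hM e he).1 h'
      · exact (hM e he).2 h'
    · intro e he hmem
      rcases hF1 _ hmem with h' | h'
      · exact (hN e he).1 h'
      · exact (hN e he).2 h'
  have hJ2 : ∀ M N : Multiset (⊤ : SimpleGraph V).edgeSet,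
      DM Subtype.val M = DM Subtype.val N →
      (∀ e ∈ M, (e : Sym2 V) ≠ s(q, r) ∧ (e : Sym2 V) ≠ s(t, p)) →
      (∀ e ∈ N, (e : Sym2 V) ≠ s(q, r) ∧ (e : Sym2 V) ≠ s(t, p)) →
      XM K M - XM K N ∈ J := by
    intro M N hD hM hN
    rw [hJdef, Ideal.add_eq_sup]
    apply Submodule.mem_sup_right
    apply binomial_mem_ext_del K F2 M N hD
    · intro e he hmem
      rcases hF2 _ hmem with h' | h'
      · exact (hM e he).1 h'
      · exact (hM e he).2 h'
    · intro e he hmem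
      rcases hF2 _ hmem with h' | h'
      · exact (hN e he).1 h'
      · exact (hN e he).2 h'
  -- the witness binomial
  set Q : MvPolynomial (⊤ : SimpleGraph V).edgeSet K :=
    X (mkE p q hpq) * X (mkE r t hrt) - X (mkE q r hqr) * X (mkE t p htp) with hQdef
  have hQt : Q ∈ toricIdeal K (⊤ : SimpleGraph V) := by
    show (aeval fun e : (⊤ : SimpleGraph V).edgeSet => edgeMon K (e : Sym2 V)) Q = 0
    rw [hQdef, map_sub, map_mul, map_mul, aeval_X, aeval_X, aeval_X, aeval_X]
    show edgeMon K s(p, q) * edgeMon K s(r, t)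
      - edgeMon K s(q, r) * edgeMon K s(t, p) = 0
    rw [edgeMon_mk, edgeMon_mk, edgeMon_mk, edgeMon_mk]
    ring
  refine ⟨?_, ?_, ?_⟩
  · -- the splitting equality
    apply le_antisymm
    · intro f hf
      have h1 := mem_span_binomials K f hf
      have h2 : {g : MvPolynomial (⊤ : SimpleGraph V).edgeSet K |
          ∃ M N : Multiset (⊤ : SimpleGraph V).edgeSet,
            DM Subtype.val M = DM Subtype.val N ∧ g = XM K M - XM K N}
          ⊆ (J : Set (MvPolynomial (⊤ : SimpleGraph V).edgeSet K)) := by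
        rintro g ⟨M, N, hD, rfl⟩
        exact rel_of_DM_eq K J p q r t hpq hpr hpt hqr hqt hrt hJ1 hJ2 M.card M N rfl hD
      have h3 : Submodule.span K {g : MvPolynomial (⊤ : SimpleGraph V).edgeSet K |
          ∃ M N : Multiset (⊤ : SimpleGraph V).edgeSet,
            DM Subtype.val M = DM Subtype.val N ∧ g = XM K M - XM K N}
          ≤ Submodule.restrictScalars K J := Submodule.span_le.2 h2
      exact h3 h1
    · rw [Ideal.add_eq_sup]
      exact sup_le (extIdeal_le_toric K _) (extIdeal_le_toric K _)
  · -- first ideal is proper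
    apply extIdeal_ne K F1 s(p, q) haF1 Q hQt
    rw [hQdef, map_sub, map_mul, map_mul, aeval_X, aeval_X, aeval_X, aeval_X]
    simp only [mkE_coe]
    rw [if_pos trivial]
    simp only [sym2_ne_left (Ne.symm hpr) (Ne.symm hqr),
      sym2_ne_right (Ne.symm hpr) (Ne.symm hqr),
      sym2_ne_left htp (Ne.symm hqt), if_false, ↓reduceIte]
    rw [zero_mul, zero_sub, neg_ne_zero, edgeMon_mk, edgeMon_mk]
    exact mul_ne_zero (mul_ne_zero (MvPolynomial.X_ne_zero q) (MvPolynomial.X_ne_zero r))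
      (mul_ne_zero (MvPolynomial.X_ne_zero t) (MvPolynomial.X_ne_zero p))
  · -- second ideal is proper
    apply extIdeal_ne K F2 s(q, r) hbF2 Q hQt
    rw [hQdef, map_sub, map_mul, map_mul, aeval_X, aeval_X, aeval_X, aeval_X]
    simp only [mkE_coe]
    simp only [sym2_ne_left hpq hpr,
      sym2_ne_right (Ne.symm hqt) (Ne.symm hrt),
      if_true,
      sym2_ne_left (Ne.symm hqt) (Ne.symm hrt), if_false, ↓reduceIte]
    rw [zero_mul, sub_zero, edgeMon_mk, edgeMon_mk]
    exact mul_ne_zero (mul_ne_zero (MvPolynomial.X_ne_zero p) (MvPolynomial.X_ne_zero q))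
      (mul_ne_zero (MvPolynomial.X_ne_zero r) (MvPolynomial.X_ne_zero t))

end Main

end TS

/-- Let `n ≥ 4` and let `(a, b, c, d)` be a cycle of length 4 in the
complete graph `K_n` (with `a = {p,q}`, `b = {q,r}`, `c = {r,t}`, `d = {t,p}` for
pairwise distinct vertices `p, q, r, t`).  Then each of
`I_{K_n} = I_{K_n∖a} + I_{K_n∖b}`, `I_{K_n} = I_{K_n∖{a,c}} + I_{K_n∖b}`, and
`I_{K_n} = I_{K_n∖a} + I_{K_n∖{b,d}}` holds and is a subgraph splitting of `I_{K_n}`. -/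
theorem completeGraph_three_splittings_of_four_cycle
    (K : Type) [Field K] (n : ℕ) (hn : 4 ≤ n) (p q r t : Fin n)
    (hpq : p ≠ q) (hpr : p ≠ r) (hpt : p ≠ t)
    (hqr : q ≠ r) (hqt : q ≠ t) (hrt : r ≠ t) :
    IsSubgraphSplitting K (⊤ : SimpleGraph (Fin n))
      ((⊤ : SimpleGraph (Fin n)).deleteEdges {s(p, q)})
      ((⊤ : SimpleGraph (Fin n)).deleteEdges {s(q, r)})
      (SimpleGraph.deleteEdges_le _) (SimpleGraph.deleteEdges_le _) ∧
    IsSubgraphSplitting K (⊤ : SimpleGraph (Fin n))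
      ((⊤ : SimpleGraph (Fin n)).deleteEdges {s(p, q), s(r, t)})
      ((⊤ : SimpleGraph (Fin n)).deleteEdges {s(q, r)})
      (SimpleGraph.deleteEdges_le _) (SimpleGraph.deleteEdges_le _) ∧
    IsSubgraphSplitting K (⊤ : SimpleGraph (Fin n))
      ((⊤ : SimpleGraph (Fin n)).deleteEdges {s(p, q)})
      ((⊤ : SimpleGraph (Fin n)).deleteEdges {s(q, r), s(t, p)})
      (SimpleGraph.deleteEdges_le _) (SimpleGraph.deleteEdges_le _) := by
  refine ⟨?_, ?_, ?_⟩
  · exact TS.splitting_general K p q r t hpq hpr hpt hqr hqt hrt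
      {s(p, q)} {s(q, r)} (fun g hg => Or.inl hg) (fun g hg => Or.inl hg) rfl rfl
  · exact TS.splitting_general K p q r t hpq hpr hpt hqr hqt hrt
      {s(p, q), s(r, t)} {s(q, r)} (fun g hg => hg) (fun g hg => Or.inl hg)
      (Or.inl rfl) rfl
  · exact TS.splitting_general K p q r t hpq hpr hpt hqr hqt hrt
      {s(p, q)} {s(q, r), s(t, p)} (fun g hg => Or.inl hg) (fun g hg => hg)
      rfl (Or.inl rfl)
end
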